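/- arXiv:2102.05940 — 5 statements merged into one kernel-verified Lean document; each statement's English description precedes it below -/
import Mathlib

section
/- Let (X,d,μ) be a geodesic metric measure space that is κ-doubling at scale R, for some κ ≥ 1 and R ∈ (0,∞]. Then there exist constants λ > 0 and δ > 0 depending only on κ such that μ(B_s(x))·e^{−λ}·(r/s)^δ ≤ μ(B_r(x)) for every x ∈ X and all radii 0 < s < r < min{R, D/2}, where D = diam(X,d) = sup{d(x,y) : x,y ∈ X}. -/
open MeasureTheory Metric Filter Set
open scoped ENNReal

/-- `(X,d,μ)` is `κ`-doubling at scale `R ∈ (0,∞]`. -/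
def DoublingAtScale {X : Type*} [MetricSpace X] [MeasurableSpace X] (μ : Measure X)
    (κ : ℝ) (R : ℝ≥0∞) : Prop :=
  ∀ (x : X) (r : ℝ), 0 < r → ENNReal.ofReal r ≤ R →
    μ (ball x (2 * r)) ≤ ENNReal.ofReal κ * μ (ball x r)

/-- The measure is finite and nonzero on every ball of positive radius. -/
def BallMeasureNontrivial {X : Type*} [MetricSpace X] [MeasurableSpace X]
    (μ : Measure X) : Prop :=
  ∀ (x : X) (r : ℝ), 0 < r → 0 < μ (ball x r) ∧ μ (ball x r) < ⊤

/-- A metric space is geodesic: any two points are joined by a curve, parametrized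
by arclength, whose length equals the distance between them. -/
def IsGeodesicSpace (X : Type*) [MetricSpace X] : Prop :=
  ∀ x y : X, ∃ γ : ℝ → X, γ 0 = x ∧ γ (dist x y) = y ∧
    ∀ s ∈ Set.Icc (0 : ℝ) (dist x y), ∀ t ∈ Set.Icc (0 : ℝ) (dist x y),
      dist (γ s) (γ t) = |s - t|

lemma rd_step {X : Type} [MetricSpace X] [MeasurableSpace X] [BorelSpace X]
    (μ : Measure X) (R : ℝ≥0∞) (κ : ℝ) (hκ : 1 ≤ κ)
    (hgeo : IsGeodesicSpace X) (hdb : DoublingAtScale μ κ R)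
    (x : X) (t : ℝ) (ht : 0 < t) (htR : ENNReal.ofReal t ≤ R)
    (htd : ENNReal.ofReal t < EMetric.diam (Set.univ : Set X) / 2) :
    (1 + (ENNReal.ofReal κ)⁻¹ ^ 3) * μ (ball x (t / 2)) ≤ μ (ball x t) := by
  have hκ0 : (0:ℝ) < κ := lt_of_lt_of_le one_pos hκ
  set K := ENNReal.ofReal κ with hK
  have hK0 : K ≠ 0 := by
    simp [hK, ENNReal.ofReal_eq_zero, not_le, hκ0]
  have hKtop : K ≠ ⊤ := ENNReal.ofReal_ne_top
  -- find a far point w with t < dist x w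
  have hdiam : ¬ EMetric.diam (Set.univ : Set X) ≤ ENNReal.ofReal (2 * t) := by
    intro h
    have h2 : ENNReal.ofReal (2 * t) = 2 * ENNReal.ofReal t := by
      rw [ENNReal.ofReal_mul (by norm_num)]; norm_num
    have : EMetric.diam (Set.univ : Set X) / 2 ≤ ENNReal.ofReal t := by
      rw [ENNReal.div_le_iff (by norm_num) (by norm_num)]
      calc EMetric.diam (Set.univ : Set X) ≤ 2 * ENNReal.ofReal t := h2 ▸ h
        _ = ENNReal.ofReal t * 2 := mul_comm _ _
    exact absurd (lt_of_lt_of_le htd this) (lt_irrefl _)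
  obtain ⟨a, -, b, -, hab⟩ : ∃ a ∈ (Set.univ : Set X), ∃ b ∈ (Set.univ : Set X),
      ¬ edist a b ≤ ENNReal.ofReal (2 * t) := by
    by_contra h
    push_neg at h
    exact hdiam (EMetric.diam_le fun a ha b hb => h a ha b hb)
  have hab' : 2 * t < dist a b := by
    by_contra h
    push_neg at h
    exact hab (by rw [edist_dist]; exact ENNReal.ofReal_le_ofReal h)
  obtain ⟨w, hw⟩ : ∃ w : X, t < dist x w := by
    rcases lt_or_ge t (dist x a) with h | h
    · exact ⟨a, h⟩
    · refine ⟨b, ?_⟩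
      have := dist_triangle a x b
      rw [dist_comm a x] at this
      linarith [hab']
  -- geodesic point z at distance 3t/4 from x
  obtain ⟨γ, hγ0, hγL, hiso⟩ := hgeo x w
  set z := γ (3 * t / 4) with hz
  have hmem1 : (0:ℝ) ∈ Set.Icc (0:ℝ) (dist x w) := ⟨le_refl _, dist_nonneg⟩
  have hmem2 : (3 * t / 4) ∈ Set.Icc (0:ℝ) (dist x w) := ⟨by linarith, by linarith⟩
  have hxz : dist x z = 3 * t / 4 := by
    have := hiso 0 hmem1 (3 * t / 4) hmem2
    rw [hγ0] at this
    rw [this]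
    rw [abs_of_nonpos (by linarith)]
    ring
  -- ball inclusions
  have h1 : ball z (t / 4) ⊆ ball x t := by
    intro y hy
    rw [mem_ball] at hy ⊢
    have := dist_triangle y z x
    rw [dist_comm z x] at this
    linarith [hxz]
  have h2 : Disjoint (ball x (t / 2)) (ball z (t / 4)) := by
    rw [Set.disjoint_left]
    intro y hy1 hy2
    rw [mem_ball] at hy1 hy2
    have := dist_triangle x y z
    rw [dist_comm y x] at hy1
    linarith [hxz]
  have h3 : ball x (t / 2) ⊆ ball z (2 * t) := by
    intro y hy
    rw [mem_ball] at hy ⊢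
    have htri := dist_triangle y x z
    rw [dist_comm x z] at htri
    rw [dist_comm x z] at hxz
    linarith
  -- doubling three times
  have hd1 : μ (ball z (2 * t)) ≤ K * μ (ball z t) := hdb z t ht htR
  have hd2 : μ (ball z t) ≤ K * μ (ball z (t / 2)) := by
    have := hdb z (t / 2) (by linarith) (le_trans (ENNReal.ofReal_le_ofReal (by linarith)) htR)
    rwa [show 2 * (t / 2) = t by ring] at this
  have hd3 : μ (ball z (t / 2)) ≤ K * μ (ball z (t / 4)) := by
    have := hdb z (t / 4) (by linarith) (le_trans (ENNReal.ofReal_le_ofReal (by linarith)) htR)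
    rwa [show 2 * (t / 4) = t / 2 by ring] at this
  have hchain : μ (ball x (t / 2)) ≤ K ^ 3 * μ (ball z (t / 4)) := by
    calc μ (ball x (t / 2)) ≤ μ (ball z (2 * t)) := measure_mono h3
      _ ≤ K * μ (ball z t) := hd1
      _ ≤ K * (K * μ (ball z (t / 2))) := mul_le_mul_right hd2 _
      _ ≤ K * (K * (K * μ (ball z (t / 4)))) := by
          exact mul_le_mul_right (mul_le_mul_right hd3 _) _
      _ = K ^ 3 * μ (ball z (t / 4)) := by ring
  have hrev : K⁻¹ ^ 3 * μ (ball x (t / 2)) ≤ μ (ball z (t / 4)) := by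
    calc K⁻¹ ^ 3 * μ (ball x (t / 2)) ≤ K⁻¹ ^ 3 * (K ^ 3 * μ (ball z (t / 4))) :=
          mul_le_mul_right hchain _
      _ = (K⁻¹ ^ 3 * K ^ 3) * μ (ball z (t / 4)) := by ring
      _ = μ (ball z (t / 4)) := by
          rw [← mul_pow, ENNReal.inv_mul_cancel hK0 hKtop, one_pow, one_mul]
  calc (1 + K⁻¹ ^ 3) * μ (ball x (t / 2))
      = μ (ball x (t / 2)) + K⁻¹ ^ 3 * μ (ball x (t / 2)) := by ring
    _ ≤ μ (ball x (t / 2)) + μ (ball z (t / 4)) := add_le_add_right hrev _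
    _ = μ (ball x (t / 2) ∪ ball z (t / 4)) :=
        (measure_union h2 measurableSet_ball).symm
    _ ≤ μ (ball x t) := measure_mono (Set.union_subset (ball_subset_ball (by linarith)) h1)

lemma rd_iter {X : Type} [MetricSpace X] [MeasurableSpace X] [BorelSpace X]
    (μ : Measure X) (R : ℝ≥0∞) (κ : ℝ) (hκ : 1 ≤ κ)
    (hgeo : IsGeodesicSpace X) (hdb : DoublingAtScale μ κ R) (x : X) (n : ℕ) :
    ∀ t : ℝ, 0 < t → ENNReal.ofReal t ≤ R →
      ENNReal.ofReal t < EMetric.diam (Set.univ : Set X) / 2 →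
      (1 + (ENNReal.ofReal κ)⁻¹ ^ 3) ^ n * μ (ball x (t / 2 ^ n)) ≤ μ (ball x t) := by
  induction n with
  | zero => intro t ht htR htd; simp
  | succ n ih =>
    intro t ht htR htd
    have ht2 : 0 < t / 2 := by linarith
    have ht2R : ENNReal.ofReal (t / 2) ≤ R :=
      le_trans (ENNReal.ofReal_le_ofReal (by linarith)) htR
    have ht2d : ENNReal.ofReal (t / 2) < EMetric.diam (Set.univ : Set X) / 2 :=
      lt_of_le_of_lt (ENNReal.ofReal_le_ofReal (by linarith)) htd
    have hrw : t / 2 ^ (n + 1) = (t / 2) / 2 ^ n := by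
      rw [pow_succ]; ring
    calc (1 + (ENNReal.ofReal κ)⁻¹ ^ 3) ^ (n + 1) * μ (ball x (t / 2 ^ (n + 1)))
        = (1 + (ENNReal.ofReal κ)⁻¹ ^ 3) *
          ((1 + (ENNReal.ofReal κ)⁻¹ ^ 3) ^ n * μ (ball x ((t / 2) / 2 ^ n))) := by
          rw [hrw, pow_succ]; ring
      _ ≤ (1 + (ENNReal.ofReal κ)⁻¹ ^ 3) * μ (ball x (t / 2)) :=
          mul_le_mul_right (ih (t / 2) ht2 ht2R ht2d) _
      _ ≤ μ (ball x t) := rd_step μ R κ hκ hgeo hdb x t ht htR htd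

/-- Reverse doubling:  `μ(B_s(x))·e^{−λ}·(r/s)^δ ≤ μ(B_r(x))` for
`0 < s < r < min{R, diam(X)/2}`, with `λ, δ` depending only on `κ`. -/
theorem reverse_doubling (κ : ℝ) (hκ : 1 ≤ κ) :
    ∃ lam δ : ℝ, 0 < lam ∧ 0 < δ ∧
      ∀ (X : Type) [MetricSpace X] [MeasurableSpace X] [BorelSpace X]
        (μ : Measure X) (R : ℝ≥0∞),
        0 < R → BallMeasureNontrivial μ → IsGeodesicSpace X → DoublingAtScale μ κ R →
        ∀ (x : X) (s r : ℝ), 0 < s → s < r →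
          ENNReal.ofReal r < min R (EMetric.diam (Set.univ : Set X) / 2) →
          ENNReal.ofReal (Real.exp (-lam) * (r / s) ^ δ) * μ (ball x s) ≤ μ (ball x r) := by

  have hκ0 : (0:ℝ) < κ := lt_of_lt_of_le one_pos hκ
  set b : ℝ := κ⁻¹ ^ 3 with hb
  have hb0 : 0 < b := by positivity
  have hlog2 : (0:ℝ) < Real.log 2 := Real.log_pos (by norm_num)
  refine ⟨Real.log (1 + b), Real.log (1 + b) / Real.log 2,
    Real.log_pos (by linarith), div_pos (Real.log_pos (by linarith)) hlog2, ?_⟩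
  intro X _ _ _ μ R hR _ hgeo hdb x s r hs hsr hr
  set lam := Real.log (1 + b) with hlam
  set δ := lam / Real.log 2 with hδ
  have hr0 : 0 < r := lt_trans hs hsr
  have hrs1 : 1 < r / s := (one_lt_div hs).mpr hsr
  set y := Real.logb 2 (r / s) with hy
  have hy0 : 0 < y := Real.logb_pos (by norm_num) hrs1
  set n := ⌊y⌋₊ with hn
  -- 2^n ≤ r/s
  have h2n : (2:ℝ) ^ n ≤ r / s := by
    have h1 : (n:ℝ) ≤ y := Nat.floor_le hy0.le
    have := Real.rpow_le_rpow_left_iff (x := (2:ℝ)) (by norm_num) |>.mpr h1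
    rwa [Real.rpow_natCast, Real.rpow_logb (by norm_num) (by norm_num) (by linarith)] at this
  have hsle : s ≤ r / 2 ^ n := by
    rw [le_div_iff₀ (by positivity)]
    calc s * 2 ^ n ≤ s * (r / s) := by nlinarith [h2n, hs]
      _ = r := by field_simp
  -- constant inequality on the real side
  have hexp : Real.exp lam = 1 + b := Real.exp_log (by linarith)
  have hreal : Real.exp (-lam) * (r / s) ^ δ ≤ (1 + b) ^ n := by
    have hrs0 : (0:ℝ) < r / s := by positivity
    have hrp : (r / s) ^ δ = Real.exp (lam * y) := by
      rw [Real.rpow_def_of_pos hrs0, hδ, hy, Real.logb]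
      congr 1
      ring
    calc Real.exp (-lam) * (r / s) ^ δ = Real.exp (lam * (y - 1)) := by
          rw [hrp, ← Real.exp_add]; congr 1; ring
      _ ≤ Real.exp (lam * n) := by
          apply Real.exp_le_exp.mpr
          have hlam0 : 0 < lam := Real.log_pos (by linarith)
          have : y - 1 ≤ n := by
            have := Nat.lt_floor_add_one y
            linarith
          nlinarith
      _ = (1 + b) ^ n := by
          rw [← hexp, ← Real.exp_nat_mul]
          ring_nf
  -- assemble in ENNReal
  have hrR : ENNReal.ofReal r ≤ R := (lt_min_iff.mp hr).1.le
  have hrd : ENNReal.ofReal r < EMetric.diam (Set.univ : Set X) / 2 := (lt_min_iff.mp hr).2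
  have hiter := rd_iter μ R κ hκ hgeo hdb x n r hr0 hrR hrd
  have hKconst : ENNReal.ofReal ((1 + b) ^ n) = (1 + (ENNReal.ofReal κ)⁻¹ ^ 3) ^ n := by
    rw [ENNReal.ofReal_pow (by linarith)]
    congr 1
    rw [ENNReal.ofReal_add (by norm_num) hb0.le, ENNReal.ofReal_one, hb,
      ENNReal.ofReal_pow (by positivity), ENNReal.ofReal_inv_of_pos hκ0]
  calc ENNReal.ofReal (Real.exp (-lam) * (r / s) ^ δ) * μ (ball x s)
      ≤ ENNReal.ofReal ((1 + b) ^ n) * μ (ball x (r / 2 ^ n)) :=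
        mul_le_mul' (ENNReal.ofReal_le_ofReal hreal)
          (measure_mono (ball_subset_ball hsle))
    _ = (1 + (ENNReal.ofReal κ)⁻¹ ^ 3) ^ n * μ (ball x (r / 2 ^ n)) := by rw [hKconst]
    _ ≤ μ (ball x r) := hiter
end

section
/- Let (X,d,μ) be a geodesic metric measure space that is κ-doubling at scale R, for some κ ≥ 1 and R ∈ (0,∞). Then every metric sphere is μ-null: for every x ∈ X and every r > 0, μ({y ∈ X : d(x,y) = r}) = 0; in particular the topological boundary of every open ball has μ-measure zero. -/
open MeasureTheory Metric Filter Set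
open scoped ENNReal Topology

/-- Iterated doubling: four doublings go from radius `ε` to radius `16 ε`. -/
lemma doub4 {X : Type*} [MetricSpace X] [MeasurableSpace X]
    (μ : Measure X) (κ R : ℝ) (hdoub : DoublingAtScale μ κ (ENNReal.ofReal R))
    (z : X) (ε : ℝ) (hε : 0 < ε) (hεR : 8 * ε ≤ R) :
    μ (ball z (16 * ε)) ≤ ENNReal.ofReal κ ^ 4 * μ (ball z ε) := by
  have h8 : ENNReal.ofReal (8 * ε) ≤ ENNReal.ofReal R := ENNReal.ofReal_le_ofReal hεR
  have h4 : ENNReal.ofReal (4 * ε) ≤ ENNReal.ofReal R :=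
    ENNReal.ofReal_le_ofReal (by linarith)
  have h2 : ENNReal.ofReal (2 * ε) ≤ ENNReal.ofReal R :=
    ENNReal.ofReal_le_ofReal (by linarith)
  have h1 : ENNReal.ofReal ε ≤ ENNReal.ofReal R :=
    ENNReal.ofReal_le_ofReal (by linarith)
  have e1 := hdoub z (8 * ε) (by linarith) h8
  have e2 := hdoub z (4 * ε) (by linarith) h4
  have e3 := hdoub z (2 * ε) (by linarith) h2
  have e4 := hdoub z ε hε h1
  have r1 : (16 : ℝ) * ε = 2 * (8 * ε) := by ring
  have r2 : (8 : ℝ) * ε = 2 * (4 * ε) := by ring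
  have r3 : (4 : ℝ) * ε = 2 * (2 * ε) := by ring
  calc μ (ball z (16 * ε)) = μ (ball z (2 * (8 * ε))) := by rw [← r1]
    _ ≤ ENNReal.ofReal κ * μ (ball z (8 * ε)) := e1
    _ = ENNReal.ofReal κ * μ (ball z (2 * (4 * ε))) := by rw [← r2]
    _ ≤ ENNReal.ofReal κ * (ENNReal.ofReal κ * μ (ball z (4 * ε))) := mul_le_mul_right e2 _
    _ = ENNReal.ofReal κ ^ 2 * μ (ball z (2 * (2 * ε))) := by rw [← r3]; ring
    _ ≤ ENNReal.ofReal κ ^ 2 * (ENNReal.ofReal κ * μ (ball z (2 * ε))) :=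
        mul_le_mul_right e3 _
    _ = ENNReal.ofReal κ ^ 3 * μ (ball z (2 * ε)) := by ring
    _ ≤ ENNReal.ofReal κ ^ 3 * (ENNReal.ofReal κ * μ (ball z ε)) := mul_le_mul_right e4 _
    _ = ENNReal.ofReal κ ^ 4 * μ (ball z ε) := by ring

/-- The key annulus estimate. -/
lemma key_estimate {X : Type*} [MetricSpace X] [MeasurableSpace X] [BorelSpace X]
    (μ : Measure X) (κ R : ℝ)
    (hball : BallMeasureNontrivial μ) (hgeo : IsGeodesicSpace X)
    (hdoub : DoublingAtScale μ κ (ENNReal.ofReal R))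
    (x : X) (r ε : ℝ) (hr : 0 < r) (hε : 0 < ε) (hεR : 8 * ε ≤ R) (hεr : 3 * ε ≤ r) :
    μ (sphere x r) ≤ ENNReal.ofReal κ ^ 4 * μ (ball x r \ closedBall x (r - 4 * ε)) := by
  classical
  -- maximal 8ε-separated subset of the sphere
  set 𝒞 : Set (Set X) :=
    {T | T ⊆ sphere x r ∧ T.Pairwise (fun a b => 8 * ε ≤ dist a b)} with h𝒞
  obtain ⟨T, hTmax⟩ : ∃ T, Maximal (· ∈ 𝒞) T := by
    apply zorn_subset
    intro c hc hchain
    refine ⟨⋃₀ c, ⟨?_, ?_⟩, fun s hs => subset_sUnion_of_mem hs⟩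
    · exact sUnion_subset fun s hs => (hc hs).1
    · intro a ha b hb hab
      obtain ⟨s, hs, has⟩ := ha
      obtain ⟨s', hs', hbs'⟩ := hb
      rcases hchain.total hs hs' with h | h
      · exact (hc hs').2 (h has) hbs' hab
      · exact (hc hs).2 has (h hbs') hab
  have hTsub : T ⊆ sphere x r := hTmax.1.1
  have hTsep : T.Pairwise (fun a b => 8 * ε ≤ dist a b) := hTmax.1.2
  -- covering property
  have hcover : ∀ y ∈ sphere x r, ∃ t ∈ T, dist y t < 8 * ε := by
    intro y hy
    by_contra hcon
    push_neg at hcon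
    have hyT : y ∉ T := by
      intro hyT
      have := hcon y hyT
      simp at this
      linarith
    have hins : insert y T ∈ 𝒞 := by
      refine ⟨insert_subset hy hTsub, hTsep.insert ?_⟩
      intro t ht hne
      exact ⟨hcon t ht, by rw [dist_comm]; exact hcon t ht⟩
    have := hTmax.2 hins (subset_insert y T) (mem_insert y T)
    exact hyT this
  -- points pushed inside along geodesics
  have hz : ∀ t : X, ∃ z : X, t ∈ T → dist x z = r - 3 * ε ∧ dist t z = 3 * ε := by
    intro t
    by_cases ht : t ∈ T
    · obtain ⟨γ, hγ0, hγ1, hγd⟩ := hgeo x t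
      have hdxt : dist x t = r := by
        have := hTsub ht
        simp only [mem_sphere] at this
        rw [dist_comm]; exact this
      refine ⟨γ (r - 3 * ε), fun _ => ⟨?_, ?_⟩⟩
      · have h0 : (0 : ℝ) ∈ Set.Icc (0 : ℝ) (dist x t) := by
          constructor <;> simp [hdxt, hr.le]
        have h1 : r - 3 * ε ∈ Set.Icc (0 : ℝ) (dist x t) := by
          rw [hdxt]; constructor <;> [linarith; linarith]
        have := hγd 0 h0 (r - 3 * ε) h1
        rw [hγ0] at this
        rw [this]
        rw [abs_of_nonpos (by linarith)]
        ring
      · have h1 : r - 3 * ε ∈ Set.Icc (0 : ℝ) (dist x t) := by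
          rw [hdxt]; constructor <;> [linarith; linarith]
        have h2 : dist x t ∈ Set.Icc (0 : ℝ) (dist x t) := by
          constructor <;> simp [hdxt, hr.le]
        have := hγd (dist x t) h2 (r - 3 * ε) h1
        rw [hγ1, hdxt] at this
        rw [this, abs_of_nonneg (by linarith)]
        ring
    · exact ⟨t, fun h => absurd h ht⟩
  choose z hzprop using hz
  have hzx : ∀ t ∈ T, dist x (z t) = r - 3 * ε := fun t ht => (hzprop t ht).1
  have hzt : ∀ t ∈ T, dist t (z t) = 3 * ε := fun t ht => (hzprop t ht).2
  -- ball inclusions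
  have h1 : ∀ t ∈ T, ball t (8 * ε) ⊆ ball (z t) (16 * ε) := by
    intro t ht w hw
    rw [mem_ball] at hw ⊢
    have : dist w (z t) ≤ dist w t + dist t (z t) := dist_triangle _ _ _
    rw [hzt t ht] at this
    linarith
  have h2 : ∀ t ∈ T, ball (z t) ε ⊆ ball x r \ closedBall x (r - 4 * ε) := by
    intro t ht w hw
    rw [mem_ball] at hw
    have hle : dist w x ≤ dist w (z t) + dist (z t) x := dist_triangle _ _ _
    have hge : dist x (z t) ≤ dist x w + dist w (z t) := dist_triangle _ _ _
    rw [dist_comm (z t) x, hzx t ht] at hle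
    rw [hzx t ht, dist_comm x w] at hge
    constructor
    · rw [mem_ball]; linarith
    · rw [mem_closedBall]; push_neg; linarith
  have hdisj : ∀ t ∈ T, ∀ t' ∈ T, t ≠ t' → Disjoint (ball (z t) ε) (ball (z t') ε) := by
    intro t ht t' ht' hne
    apply ball_disjoint_ball
    have hsep := hTsep ht ht' hne
    have ha : dist t t' ≤ dist t (z t) + dist (z t) (z t') + dist (z t') t' :=
      dist_triangle4 _ _ _ _
    rw [hzt t ht, dist_comm (z t') t', hzt t' ht'] at ha
    linarith
  -- countability of T
  have hsub_ball : ∀ t ∈ T, ball (z t) ε ⊆ ball x r := by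
    intro t ht
    exact (h2 t ht).trans diff_subset
  have hTcount : T.Countable := by
    have hcnt : Set.Countable {i : T | 0 < μ (ball (z i) ε)} := by
      apply Measure.countable_meas_pos_of_disjoint_of_meas_iUnion_ne_top μ
        (As := fun i : T => ball (z i) ε)
      · exact fun i => measurableSet_ball
      · intro i j hij
        exact hdisj i i.2 j j.2 (fun h => hij (Subtype.ext h))
      · have : (⋃ i : T, ball (z i) ε) ⊆ ball x r :=
          iUnion_subset fun i => hsub_ball i i.2
        exact ne_top_of_le_ne_top (hball x r hr).2.ne (measure_mono this)
    have : {i : T | 0 < μ (ball (z i) ε)} = univ := by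
      ext i; simp only [mem_setOf_eq, mem_univ, iff_true]
      exact (hball (z i) ε hε).1
    rw [this, countable_univ_iff] at hcnt
    exact countable_coe_iff.mp hcnt
  -- the main chain of inequalities
  have hcov : sphere x r ⊆ ⋃ t ∈ T, ball t (8 * ε) := by
    intro y hy
    obtain ⟨t, ht, hd⟩ := hcover y hy
    exact mem_biUnion ht (by rwa [mem_ball])
  calc μ (sphere x r) ≤ μ (⋃ t ∈ T, ball t (8 * ε)) := measure_mono hcov
    _ ≤ ∑' t : T, μ (ball (t : X) (8 * ε)) := measure_biUnion_le μ hTcount _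
    _ ≤ ∑' t : T, ENNReal.ofReal κ ^ 4 * μ (ball (z t) ε) := by
        apply ENNReal.tsum_le_tsum
        intro t
        calc μ (ball (t : X) (8 * ε)) ≤ μ (ball (z t) (16 * ε)) :=
              measure_mono (h1 t t.2)
          _ ≤ ENNReal.ofReal κ ^ 4 * μ (ball (z t) ε) :=
              doub4 μ κ R hdoub (z t) ε hε hεR
    _ = ENNReal.ofReal κ ^ 4 * ∑' t : T, μ (ball (z t) ε) := ENNReal.tsum_mul_left
    _ = ENNReal.ofReal κ ^ 4 * μ (⋃ t ∈ T, ball (z t) ε) := by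
        rw [measure_biUnion hTcount ?_ (fun t _ => measurableSet_ball)]
        intro t ht t' ht' hne
        exact hdisj t ht t' ht' hne
    _ ≤ ENNReal.ofReal κ ^ 4 * μ (ball x r \ closedBall x (r - 4 * ε)) := by
        apply mul_le_mul_right
        exact measure_mono (iUnion₂_subset h2)

/-- In a geodesic metric measure space which is `κ`-doubling at a finite scale `R`,
every metric sphere is `μ`-null; in particular the boundary of every open ball is null. -/
theorem spheres_are_null {X : Type*} [MetricSpace X] [MeasurableSpace X] [BorelSpace X]
    (μ : Measure X) (κ R : ℝ) (hκ : 1 ≤ κ) (hR : 0 < R)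
    (hball : BallMeasureNontrivial μ) (hgeo : IsGeodesicSpace X)
    (hdoub : DoublingAtScale μ κ (ENNReal.ofReal R)) :
    ∀ (x : X) (r : ℝ), 0 < r →
      μ (sphere x r) = 0 ∧ μ (frontier (ball x r)) = 0 := by
  intro x r hr
  set c : ℝ := min (r / 3) (R / 8) with hc_def
  have hc : 0 < c := lt_min (by linarith) (by linarith)
  set ε : ℕ → ℝ := fun n => c / 2 ^ n with hε_def
  have hεpos : ∀ n, 0 < ε n := fun n => div_pos hc (by positivity)
  have hεle : ∀ n, ε n ≤ c := fun n => by
    rw [hε_def]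
    apply div_le_self hc.le
    exact one_le_pow₀ (by norm_num)
  have hεR : ∀ n, 8 * ε n ≤ R := fun n => by
    have h1 : ε n ≤ R / 8 := (hεle n).trans (min_le_right _ _)
    linarith
  have hεr : ∀ n, 3 * ε n ≤ r := fun n => by
    have h1 : ε n ≤ r / 3 := (hεle n).trans (min_le_left _ _)
    linarith
  set s : ℕ → Set X := fun n => ball x r \ closedBall x (r - 4 * ε n) with hs_def
  have hkey : ∀ n, μ (sphere x r) ≤ ENNReal.ofReal κ ^ 4 * μ (s n) := fun n =>
    key_estimate μ κ R hball hgeo hdoub x r (ε n) hr (hεpos n) (hεR n) (hεr n)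
  have hanti : Antitone s := by
    intro n m hnm
    apply diff_subset_diff_right
    apply closedBall_subset_closedBall
    have : ε m ≤ ε n := by
      rw [hε_def]
      apply div_le_div_of_nonneg_left hc.le (by positivity)
      exact pow_le_pow_right₀ (by norm_num) hnm
    linarith
  have hiInter : ⋂ n, s n = ∅ := by
    ext y
    simp only [mem_iInter, mem_empty_iff_false, iff_false]
    intro hy
    have hy0 := hy 0
    have hd : dist y x < r := (mem_ball.mp hy0.1)
    obtain ⟨n, hn⟩ := pow_unbounded_of_one_lt (4 * c / (r - dist y x)) (y := (2:ℝ)) one_lt_two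
    have hrd : 0 < r - dist y x := by linarith
    have h2n : (0:ℝ) < 2 ^ n := by positivity
    have hlt : 4 * ε n < r - dist y x := by
      show 4 * (c / 2 ^ n) < r - dist y x
      rw [mul_div_assoc']
      rw [div_lt_iff₀ hrd] at hn
      rw [div_lt_iff₀ h2n]
      nlinarith [hn]
    have := (hy n).2
    rw [mem_closedBall] at this
    push_neg at this
    linarith
  have hmeas : ∀ n, NullMeasurableSet (s n) μ :=
    fun n => (measurableSet_ball.diff measurableSet_closedBall).nullMeasurableSet
  have hfin : ∃ n, μ (s n) ≠ ∞ := by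
    refine ⟨0, ?_⟩
    exact ne_top_of_le_ne_top (hball x r hr).2.ne (measure_mono diff_subset)
  have htend : Tendsto (μ ∘ s) atTop (𝓝 0) := by
    have := tendsto_measure_iInter_atTop hmeas hanti hfin
    rwa [hiInter, measure_empty] at this
  have htend2 : Tendsto (fun n => ENNReal.ofReal κ ^ 4 * μ (s n)) atTop (𝓝 0) := by
    have h := ENNReal.Tendsto.const_mul (a := ENNReal.ofReal κ ^ 4) htend
      (Or.inr (ENNReal.pow_ne_top ENNReal.ofReal_ne_top))
    simpa using h
  have hsphere : μ (sphere x r) = 0 := by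
    have hle : μ (sphere x r) ≤ 0 := ge_of_tendsto' htend2 hkey
    exact le_antisymm hle zero_le
  exact ⟨hsphere, measure_mono_null frontier_ball_subset_sphere hsphere⟩
end

section
/- Let n be a positive integer and let (X,d,μ) be a proper geodesic metric measure space that is κ-doubling at scale R ∈ (0,∞). Then: (i) for every x ∈ X and every s > 0 the Θ-volume Θ_x(s) is finite, and the function (s,x) ↦ Θ_x(s) is continuous on (0,∞) × X; (ii) there exists a constant A > 0 depending only on n and κ such that Θ_x(s) ≤ A·μ(B_{√s}(x))/s^{n/2} for every x ∈ X and every s ∈ (0, R²]. -/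
open MeasureTheory Metric Filter Set
open scoped ENNReal

/-- The `Θ`-volume `Θ_x(s) = (4πs)^{-n/2} ∫_X exp(−d(x,y)²/(4s)) dμ(y)`,
as an extended nonnegative real. -/
noncomputable def Theta {X : Type*} [MetricSpace X] [MeasurableSpace X] (μ : Measure X)
    (n : ℝ) (x : X) (s : ℝ) : ℝ≥0∞ :=
  ENNReal.ofReal ((4 * Real.pi * s) ^ (-(n / 2))) *
    ∫⁻ y, ENNReal.ofReal (Real.exp (-(dist x y) ^ 2 / (4 * s))) ∂μ

open MeasureTheory Metric Filter Set
open scoped ENNReal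

section Aux
variable {X : Type*} [MetricSpace X] [MeasurableSpace X] [BorelSpace X]

lemma measurable_measure_ball_center (μ : Measure X) (t : ℝ) :
    Measurable fun y : X => μ (ball y t) := by
  apply LowerSemicontinuous.measurable
  intro y a ha
  rcases le_or_gt t 0 with ht | ht
  · simp [ball_eq_empty.2 ht] at ha
  · -- ball y t = ⋃ n, closedBall y (t - t/(n+1))
    have hU : ball y t = ⋃ n : ℕ, closedBall y (t - t / (n + 1)) := by
      ext w
      simp only [mem_ball, mem_iUnion, mem_closedBall]
      constructor
      · intro hw
        have hpos : 0 < t - dist w y := by rwa [sub_pos]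
        obtain ⟨n, hn⟩ := exists_nat_gt (t / (t - dist w y))
        refine ⟨n, ?_⟩
        have hn1 : t / (t - dist w y) < n + 1 := hn.trans (by linarith)
        have : t / (n + 1) < t - dist w y := by
          rw [div_lt_iff₀ (by positivity)] at *
          nlinarith [hn1, hpos]
        linarith
      · rintro ⟨n, hn⟩
        have : 0 < t / (n + 1) := by positivity
        linarith
    have hmono : Monotone fun n : ℕ => closedBall y (t - t / (n + 1)) := by
      intro m n hmn
      apply closedBall_subset_closedBall
      have h1 : (m : ℝ) + 1 ≤ n + 1 := by exact_mod_cast Nat.succ_le_succ hmn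
      have : t / ((n : ℝ) + 1) ≤ t / (m + 1) := by
        apply div_le_div_of_nonneg_left ht.le (by positivity) h1
      linarith
    have hsup : μ (ball y t) = ⨆ n : ℕ, μ (closedBall y (t - t / (n + 1))) := by
      rw [hU]
      exact Directed.measure_iUnion hmono.directed_le
    have ha' : a < ⨆ n : ℕ, μ (closedBall y (t - t / (n + 1))) := hsup ▸ ha
    obtain ⟨n, hn⟩ := lt_iSup_iff.1 ha'
    have hrad : t - t / (n + 1) < t := by
      have : 0 < t / (n + 1) := by positivity
      linarith
    filter_upwards [Metric.ball_mem_nhds y (show (0:ℝ) < t - (t - t/(n+1)) by linarith)]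
      with y' hy'
    show a < μ (ball y' t)
    refine hn.trans_le (measure_mono fun w hw => ?_)
    rw [mem_ball] at hy' ⊢
    rw [mem_closedBall] at hw
    calc dist w y' ≤ dist w y + dist y y' := dist_triangle _ _ _
      _ < (t - t/(n+1)) + (t - (t - t/(n+1))) := by
          rw [dist_comm y y']; exact add_lt_add_of_le_of_lt hw hy'
      _ = t := by ring

lemma sigmaFinite_of_nontrivial (μ : Measure X) (hB : BallMeasureNontrivial μ) :
    SigmaFinite μ := by
  rcases isEmpty_or_nonempty X with hX | hne
  · haveI : IsFiniteMeasure μ := ⟨by rw [Set.univ_eq_empty_iff.2 hX]; simp⟩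
    infer_instance
  · obtain ⟨x₀⟩ := hne
    exact ⟨⟨⟨fun n => ball x₀ (n + 1), fun _ => trivial,
      fun n => (hB x₀ (n + 1) (by positivity)).2, by
        apply Set.eq_univ_of_forall fun y => ?_
        obtain ⟨n, hn⟩ := exists_nat_gt (dist x₀ y)
        exact Set.mem_iUnion.2 ⟨n, by simp only [mem_ball]; rw [dist_comm]; linarith⟩⟩⟩⟩

end Aux
section Step
variable {X : Type*} [MetricSpace X] [MeasurableSpace X] [BorelSpace X]
variable {μ : Measure X} {κ R : ℝ}

lemma ofReal_kappa_pos (hκ : 1 ≤ κ) : (1:ℝ≥0∞) ≤ ENNReal.ofReal κ := by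
  simpa using ENNReal.ofReal_le_ofReal hκ

lemma double_once (hD : DoublingAtScale μ κ (ENNReal.ofReal R))
    {r : ℝ} (hr : 0 < r) (hrR : r ≤ R) (z : X) :
    μ (ball z (2 * r)) ≤ ENNReal.ofReal κ * μ (ball z r) :=
  hD z r hr (ENNReal.ofReal_le_ofReal hrR)

lemma double_two (hD : DoublingAtScale μ κ (ENNReal.ofReal R))
    {δ : ℝ} (hδ : 0 < δ) (h2 : 2 * δ ≤ R) (w : X) :
    μ (ball w (4 * δ)) ≤ ENNReal.ofReal κ ^ 2 * μ (ball w δ) := by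
  have h1 : μ (ball w (4 * δ)) ≤ ENNReal.ofReal κ * μ (ball w (2 * δ)) := by
    have := double_once hD (by linarith : (0:ℝ) < 2 * δ) (by linarith) w
    rwa [show (2:ℝ) * (2 * δ) = 4 * δ by ring] at this
  have h2' : μ (ball w (2 * δ)) ≤ ENNReal.ofReal κ * μ (ball w δ) :=
    double_once hD hδ (by linarith) w
  calc μ (ball w (4 * δ)) ≤ ENNReal.ofReal κ * (ENNReal.ofReal κ * μ (ball w δ)) :=
        h1.trans (mul_le_mul_right h2' _)
    _ = ENNReal.ofReal κ ^ 2 * μ (ball w δ) := by ring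

lemma double_three (hD : DoublingAtScale μ κ (ENNReal.ofReal R))
    {δ : ℝ} (hδ : 0 < δ) (h4 : 4 * δ ≤ R) (z : X) :
    μ (ball z (8 * δ)) ≤ ENNReal.ofReal κ ^ 3 * μ (ball z δ) := by
  have h1 : μ (ball z (8 * δ)) ≤ ENNReal.ofReal κ * μ (ball z (4 * δ)) := by
    have := double_once hD (by linarith : (0:ℝ) < 4 * δ) (by linarith) z
    rwa [show (2:ℝ) * (4 * δ) = 8 * δ by ring] at this
  have h2' := double_two hD hδ (by linarith) z
  calc μ (ball z (8 * δ)) ≤ ENNReal.ofReal κ * (ENNReal.ofReal κ ^ 2 * μ (ball z δ)) :=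
        h1.trans (mul_le_mul_right h2' _)
    _ = ENNReal.ofReal κ ^ 3 * μ (ball z δ) := by ring

/-- Key geometric step: in a geodesic space doubling at scale `R`,
`μ(B(x, r+δ)) ≤ κ⁵ μ(B(x,r))` whenever `0 < δ ≤ r` and `4δ ≤ R`. -/
lemma step_lemma (hB : BallMeasureNontrivial μ) (hG : IsGeodesicSpace X)
    (hD : DoublingAtScale μ κ (ENNReal.ofReal R)) [ProperSpace X] [SigmaFinite μ]
    {δ r : ℝ} (hδ : 0 < δ) (h4 : 4 * δ ≤ R) (hδr : δ ≤ r) (x : X) :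
    μ (ball x (r + δ)) ≤ ENNReal.ofReal κ ^ 5 * μ (ball x r) := by
  set S := ball x r with hS
  -- pointwise claim
  have claim : ∀ y ∈ ball x (r + δ),
      μ (ball y (4 * δ)) ≤ ENNReal.ofReal κ ^ 3 * μ (S ∩ ball y (3 * δ)) := by
    intro y hy
    rw [mem_ball, dist_comm] at hy
    obtain ⟨γ, hγ0, hγd, hγ⟩ := hG x y
    set ρ := dist x y with hρ
    have hρ0 : 0 ≤ ρ := dist_nonneg
    set t0 : ℝ := max (ρ - 2 * δ) 0 with ht0
    have ht00 : 0 ≤ t0 := le_max_right _ _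
    have ht0ρ : t0 ≤ ρ := max_le (by linarith) hρ0
    set z := γ t0 with hz
    have dxz : dist x z = t0 := by
      have := hγ 0 ⟨le_refl _, hρ0⟩ t0 ⟨ht00, ht0ρ⟩
      rw [hγ0] at this
      rw [this, abs_of_nonpos (by linarith)]; ring
    have dzy : dist z y = ρ - t0 := by
      have := hγ t0 ⟨ht00, ht0ρ⟩ ρ ⟨hρ0, le_refl _⟩
      rw [hγd] at this
      rw [this, abs_of_nonpos (by linarith)]; ring
    have ht0r : t0 ≤ r - δ := max_le (by linarith) (by linarith)
    have hρt0 : ρ - t0 ≤ 2 * δ := by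
      have := le_max_left (ρ - 2 * δ) 0
      linarith
    have h1 : ball z δ ⊆ S := by
      intro w hw
      rw [mem_ball] at hw ⊢
      calc dist w x ≤ dist w z + dist z x := dist_triangle _ _ _
        _ < δ + t0 := by rw [dist_comm z x, dxz]; linarith
        _ ≤ r := by linarith
    have h2 : ball z δ ⊆ ball y (3 * δ) := by
      intro w hw
      rw [mem_ball] at hw ⊢
      calc dist w y ≤ dist w z + dist z y := dist_triangle _ _ _
        _ < δ + (ρ - t0) := by rw [dzy]; linarith
        _ ≤ 3 * δ := by linarith
    have h3 : ball y (4 * δ) ⊆ ball z (8 * δ) := by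
      intro w hw
      rw [mem_ball] at hw ⊢
      calc dist w z ≤ dist w y + dist y z := dist_triangle _ _ _
        _ < 4 * δ + (ρ - t0) := by rw [dist_comm y z, dzy]; linarith
        _ ≤ 8 * δ := by linarith
    calc μ (ball y (4 * δ)) ≤ μ (ball z (8 * δ)) := measure_mono h3
      _ ≤ ENNReal.ofReal κ ^ 3 * μ (ball z δ) := double_three hD hδ h4 z
      _ ≤ ENNReal.ofReal κ ^ 3 * μ (S ∩ ball y (3 * δ)) :=
          mul_le_mul_right (measure_mono (subset_inter h1 h2)) _
  -- the function g
  set g : X → ℝ≥0∞ := fun y =>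
    (μ (ball y (4 * δ)))⁻¹ * (ENNReal.ofReal κ ^ 3 * μ (S ∩ ball y (3 * δ))) with hg
  have hone : ∀ y ∈ ball x (r + δ), (1 : ℝ≥0∞) ≤ g y := by
    intro y hy
    have hpos := (hB y (4 * δ) (by linarith)).1
    have hfin := (hB y (4 * δ) (by linarith)).2
    have : (μ (ball y (4 * δ)))⁻¹ * μ (ball y (4 * δ)) = 1 :=
      ENNReal.inv_mul_cancel hpos.ne' hfin.ne
    rw [← this]
    exact mul_le_mul_right (claim y hy) _
  have h1 : μ (ball x (r + δ)) ≤ ∫⁻ y, g y ∂μ := by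
    calc μ (ball x (r + δ)) = ∫⁻ _ in ball x (r + δ), 1 ∂μ := (setLIntegral_one _).symm
      _ ≤ ∫⁻ y in ball x (r + δ), g y ∂μ :=
          setLIntegral_mono' measurableSet_ball hone
      _ ≤ ∫⁻ y, g y ∂μ := setLIntegral_le_lintegral _ _
  -- rewrite g using an inner integral
  set T : Set (X × X) := {p : X × X | p.2 ∈ S ∧ dist p.1 p.2 < 3 * δ} with hT
  have hTmeas : MeasurableSet T := by
    have : T = (univ ×ˢ S) ∩ {p : X × X | dist p.1 p.2 < 3 * δ} := by
      ext p; simp [hT, mem_prod, and_comm]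
    rw [this]
    exact (MeasurableSet.univ.prod measurableSet_ball).inter
      ((isOpen_lt (by fun_prop) continuous_const).measurableSet)
  set H : X → X → ℝ≥0∞ := fun y w =>
    (μ (ball y (4 * δ)))⁻¹ * T.indicator (fun _ => 1) (y, w) with hH
  have hinner : ∀ y, g y = ENNReal.ofReal κ ^ 3 * ∫⁻ w, H y w ∂μ := by
    intro y
    have hμinv : (μ (ball y (4 * δ)))⁻¹ ≠ ⊤ := by
      simp [ENNReal.inv_ne_top, (hB y (4 * δ) (by linarith)).1.ne']
    have : ∫⁻ w, H y w ∂μ = (μ (ball y (4 * δ)))⁻¹ * μ (S ∩ ball y (3 * δ)) := by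
      rw [hH]
      simp only []
      rw [lintegral_const_mul' _ _ hμinv]
      congr 1
      have hset : (fun w => T.indicator (fun _ => (1:ℝ≥0∞)) (y, w))
          = (S ∩ ball y (3 * δ)).indicator (fun _ => 1) := by
        funext w
        by_cases hw : w ∈ S ∩ ball y (3 * δ)
        · rw [indicator_of_mem hw]
          rw [indicator_of_mem]
          exact ⟨hw.1, by have := hw.2; rwa [mem_ball, dist_comm] at this⟩
        · rw [indicator_of_notMem hw, indicator_of_notMem]
          intro hc
          exact hw ⟨hc.1, by rw [mem_ball, dist_comm]; exact hc.2⟩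
      rw [hset, lintegral_indicator_const (measurableSet_ball.inter measurableSet_ball)]
      · exact one_mul _
    rw [this, hg]
    ring
  have hκ3 : (ENNReal.ofReal κ ^ 3 : ℝ≥0∞) ≠ ⊤ := by
    simp [ENNReal.ofReal_ne_top]
  have hHmeas : AEMeasurable (Function.uncurry H) (μ.prod μ) := by
    have : Function.uncurry H = fun p : X × X =>
        (μ (ball p.1 (4 * δ)))⁻¹ * T.indicator (fun _ => 1) p := by
      funext p; rcases p with ⟨y, w⟩; rfl
    rw [this]
    exact (Measurable.aemeasurable
      ((((measurable_measure_ball_center μ (4 * δ)).comp measurable_fst).inv).mul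
        (measurable_const.indicator hTmeas)))
  have hswap : ∫⁻ y, ∫⁻ w, H y w ∂μ ∂μ = ∫⁻ w, ∫⁻ y, H y w ∂μ ∂μ :=
    lintegral_lintegral_swap hHmeas
  have hinner2 : ∀ w, (∫⁻ y, H y w ∂μ) ≤ S.indicator (fun _ => ENNReal.ofReal κ ^ 2) w := by
    intro w
    by_cases hw : w ∈ S
    · rw [indicator_of_mem hw]
      have hpoint : ∀ y, H y w ≤
          (ball w (3 * δ)).indicator (fun _ => (μ (ball w δ))⁻¹) y := by
        intro y
        by_cases hyw : dist y w < 3 * δ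
        · have hy : y ∈ ball w (3 * δ) := mem_ball.2 hyw
          rw [indicator_of_mem hy]
          have hsub : ball w δ ⊆ ball y (4 * δ) := by
            intro u hu
            rw [mem_ball] at hu ⊢
            calc dist u y ≤ dist u w + dist w y := dist_triangle _ _ _
              _ < δ + 3 * δ := by rw [dist_comm w y]; linarith
              _ = 4 * δ := by ring
          have hI : T.indicator (fun _ => (1:ℝ≥0∞)) (y, w) ≤ 1 := by
            classical
            by_cases hm : (y, w) ∈ T
            · rw [indicator_of_mem hm]
            · rw [indicator_of_notMem hm]; exact zero_le
          calc H y w ≤ (μ (ball y (4 * δ)))⁻¹ * 1 := mul_le_mul_right hI _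
            _ = (μ (ball y (4 * δ)))⁻¹ := mul_one _
            _ ≤ (μ (ball w δ))⁻¹ := ENNReal.inv_le_inv.2 (measure_mono hsub)
        · have hm : (y, w) ∉ T := fun hc => hyw hc.2
          have : H y w = 0 := by
            rw [hH]; simp only []; rw [indicator_of_notMem hm, mul_zero]
          rw [this]
          exact zero_le
      calc (∫⁻ y, H y w ∂μ)
          ≤ ∫⁻ y, (ball w (3 * δ)).indicator (fun _ => (μ (ball w δ))⁻¹) y ∂μ :=
            lintegral_mono hpoint
        _ = (μ (ball w δ))⁻¹ * μ (ball w (3 * δ)) :=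
            lintegral_indicator_const measurableSet_ball _
        _ ≤ (μ (ball w δ))⁻¹ * (ENNReal.ofReal κ ^ 2 * μ (ball w δ)) := by
            apply mul_le_mul_right
            exact (measure_mono (ball_subset_ball (by linarith))).trans
              (double_two hD hδ (by linarith) w)
        _ = ENNReal.ofReal κ ^ 2 * ((μ (ball w δ))⁻¹ * μ (ball w δ)) := by ring
        _ = ENNReal.ofReal κ ^ 2 := by
            rw [ENNReal.inv_mul_cancel (hB w δ hδ).1.ne' (hB w δ hδ).2.ne, mul_one]
    · rw [indicator_of_notMem hw]
      have : ∀ y, H y w = 0 := by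
        intro y
        have hm : (y, w) ∉ T := fun hc => hw hc.1
        rw [hH]; simp only []; rw [indicator_of_notMem hm, mul_zero]
      simp [this]
  calc μ (ball x (r + δ)) ≤ ∫⁻ y, g y ∂μ := h1
    _ = ∫⁻ y, ENNReal.ofReal κ ^ 3 * ∫⁻ w, H y w ∂μ ∂μ := by
        congr 1; funext y; exact hinner y
    _ = ENNReal.ofReal κ ^ 3 * ∫⁻ y, ∫⁻ w, H y w ∂μ ∂μ :=
        lintegral_const_mul' _ _ hκ3
    _ = ENNReal.ofReal κ ^ 3 * ∫⁻ w, ∫⁻ y, H y w ∂μ ∂μ := by rw [hswap]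
    _ ≤ ENNReal.ofReal κ ^ 3 * ∫⁻ w, S.indicator (fun _ => ENNReal.ofReal κ ^ 2) w ∂μ :=
        mul_le_mul_right (lintegral_mono hinner2) _
    _ = ENNReal.ofReal κ ^ 3 * (ENNReal.ofReal κ ^ 2 * μ S) := by
        rw [lintegral_indicator_const measurableSet_ball]
    _ = ENNReal.ofReal κ ^ 5 * μ S := by ring

end Step
section Core
variable {X : Type*} [MetricSpace X] [MeasurableSpace X] [BorelSpace X]
variable {μ : Measure X} {κ R : ℝ}

lemma grow_lemma (hB : BallMeasureNontrivial μ) (hG : IsGeodesicSpace X)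
    (hD : DoublingAtScale μ κ (ENNReal.ofReal R)) [ProperSpace X] [SigmaFinite μ]
    {r : ℝ} (hr : 0 < r) (hrR : r ≤ R) (x : X) (k : ℕ) :
    μ (ball x (((k : ℝ) + 1) * r)) ≤ ENNReal.ofReal κ ^ (20 * k) * μ (ball x r) := by
  have hR : 0 < R := lt_of_lt_of_le hr hrR
  set δ := min r (R / 4) with hδdef
  have hδ0 : 0 < δ := lt_min hr (by linarith)
  have h4δ : 4 * δ ≤ R := by
    have := min_le_right r (R / 4); simp only [hδdef]; linarith [min_le_right r (R/4)]
  have hδr : δ ≤ r := min_le_left _ _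
  have hrδ : r / 4 ≤ δ := le_min (by linarith) (by linarith)
  have key : ∀ m : ℕ, μ (ball x (r + m * δ)) ≤ ENNReal.ofReal κ ^ (5 * m) * μ (ball x r) := by
    intro m
    induction m with
    | zero => simp
    | succ m ih =>
        have hstep := step_lemma hB hG hD hδ0 h4δ
          (le_add_of_le_of_nonneg hδr (by positivity) :
            δ ≤ r + (m : ℝ) * δ) x
        calc μ (ball x (r + ((m : ℕ) + 1 : ℕ) * δ))
            = μ (ball x ((r + (m : ℝ) * δ) + δ)) := by push_cast; ring_nf
          _ ≤ ENNReal.ofReal κ ^ 5 * μ (ball x (r + (m : ℝ) * δ)) := hstep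
          _ ≤ ENNReal.ofReal κ ^ 5 * (ENNReal.ofReal κ ^ (5 * m) * μ (ball x r)) :=
              mul_le_mul_right ih _
          _ = ENNReal.ofReal κ ^ (5 * (m + 1)) * μ (ball x r) := by
              rw [← mul_assoc, ← pow_add]; ring_nf
  calc μ (ball x (((k : ℝ) + 1) * r)) ≤ μ (ball x (r + (4 * k : ℕ) * δ)) := by
        apply measure_mono
        apply ball_subset_ball
        push_cast
        nlinarith [Nat.cast_nonneg (α := ℝ) k]
    _ ≤ ENNReal.ofReal κ ^ (5 * (4 * k)) * μ (ball x r) := key (4 * k)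
    _ = ENNReal.ofReal κ ^ (20 * k) * μ (ball x r) := by ring_nf

lemma core_bound (hB : BallMeasureNontrivial μ) (hG : IsGeodesicSpace X)
    (hD : DoublingAtScale μ κ (ENNReal.ofReal R)) (hκ : 1 ≤ κ)
    [ProperSpace X] [SigmaFinite μ]
    {x : X} {s r : ℝ} (hs : 0 < s) (hr : 0 < r) (hrR : r ≤ R) :
    ∫⁻ y, ENNReal.ofReal (Real.exp (-(dist x y) ^ 2 / (4 * s))) ∂μ ≤
      ENNReal.ofReal (2 * Real.exp ((20 * Real.log κ + 1) ^ 2 * s / r ^ 2)) *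
        μ (ball x r) := by
  have hκ0 : (0:ℝ) < κ := by linarith
  set c := 20 * Real.log κ with hc
  have hc0 : 0 ≤ c := by
    have := Real.log_nonneg hκ; positivity
  set β := r ^ 2 / (4 * s) with hβ
  have hβ0 : 0 < β := by positivity
  set C := (c + 1) ^ 2 * s / r ^ 2 with hC
  have hCβ : C * (4 * β) = (c + 1) ^ 2 := by
    rw [hC, hβ]; field_simp
  -- the k-th term bound
  have hterm : ∀ k : ℕ,
      ENNReal.ofReal (Real.exp (-((k : ℝ) * r) ^ 2 / (4 * s))) * ENNReal.ofReal κ ^ (20 * k)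
        ≤ ENNReal.ofReal (Real.exp C) * ENNReal.ofReal (Real.exp (-1)) ^ k := by
    intro k
    rw [← ENNReal.ofReal_pow hκ0.le, ← ENNReal.ofReal_mul (by positivity),
        ← ENNReal.ofReal_pow (Real.exp_pos _).le, ← ENNReal.ofReal_mul (by positivity)]
    apply ENNReal.ofReal_le_ofReal
    have h1 : κ ^ (20 * k) = Real.exp (c * k) := by
      rw [← Real.exp_log hκ0, ← Real.exp_nat_mul]
      congr 1
      push_cast [hc]; ring
    have h2 : Real.exp (-1) ^ k = Real.exp (-(k : ℝ)) := by
      rw [← Real.exp_nat_mul]; congr 1; ring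
    rw [h1, h2, ← Real.exp_add, ← Real.exp_add]
    apply Real.exp_le_exp.2
    have hexp1 : -((k : ℝ) * r) ^ 2 / (4 * s) = -((k:ℝ)^2 * β) := by
      rw [hβ]; field_simp
    rw [hexp1]
    nlinarith [sq_nonneg ((c + 1) - 2 * β * (k : ℝ)), hβ0, hCβ, Nat.cast_nonneg (α := ℝ) k]
  -- annulus decomposition
  set A : ℕ → Set X := fun k => ball x (((k : ℝ) + 1) * r) \ ball x ((k : ℝ) * r) with hA
  have hcover : (⋃ k : ℕ, A k) = univ := by
    apply eq_univ_of_forall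
    intro y
    set k := ⌊dist y x / r⌋₊ with hk
    have hd0 : 0 ≤ dist y x / r := by positivity
    have h1 : (k : ℝ) ≤ dist y x / r := Nat.floor_le hd0
    have h2 : dist y x / r < (k : ℝ) + 1 := Nat.lt_floor_add_one _
    refine mem_iUnion.2 ⟨k, ?_, ?_⟩
    · rw [mem_ball]
      calc dist y x = dist y x / r * r := by field_simp
        _ < ((k : ℝ) + 1) * r := by
            apply mul_lt_mul_of_pos_right h2 hr
    · rw [mem_ball]
      push_neg
      calc (k : ℝ) * r ≤ dist y x / r * r := mul_le_mul_of_nonneg_right h1 hr.le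
        _ = dist y x := by field_simp
  have hupper : ∀ k : ℕ, ∫⁻ y in A k, ENNReal.ofReal (Real.exp (-(dist x y) ^ 2 / (4 * s))) ∂μ
      ≤ ENNReal.ofReal (Real.exp C) * ENNReal.ofReal (Real.exp (-1)) ^ k * μ (ball x r) := by
    intro k
    have hAm : MeasurableSet (A k) := measurableSet_ball.diff measurableSet_ball
    have hpt : ∀ y ∈ A k, ENNReal.ofReal (Real.exp (-(dist x y) ^ 2 / (4 * s)))
        ≤ ENNReal.ofReal (Real.exp (-((k : ℝ) * r) ^ 2 / (4 * s))) := by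
      intro y hy
      have hout : ¬ dist y x < (k : ℝ) * r := by
        have := hy.2; rwa [mem_ball] at this
      push_neg at hout
      have hd : (k : ℝ) * r ≤ dist x y := by rwa [dist_comm]
      apply ENNReal.ofReal_le_ofReal
      apply Real.exp_le_exp.2
      apply (div_le_div_iff_of_pos_right (by positivity : (0:ℝ) < 4 * s)).2
      nlinarith [mul_le_mul hd hd (by positivity : (0:ℝ) ≤ (k:ℝ) * r) dist_nonneg]
    calc ∫⁻ y in A k, ENNReal.ofReal (Real.exp (-(dist x y) ^ 2 / (4 * s))) ∂μ
        ≤ ∫⁻ _ in A k, ENNReal.ofReal (Real.exp (-((k : ℝ) * r) ^ 2 / (4 * s))) ∂μ :=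
          setLIntegral_mono' hAm hpt
      _ = ENNReal.ofReal (Real.exp (-((k : ℝ) * r) ^ 2 / (4 * s))) * μ (A k) :=
          setLIntegral_const _ _
      _ ≤ ENNReal.ofReal (Real.exp (-((k : ℝ) * r) ^ 2 / (4 * s))) *
            (ENNReal.ofReal κ ^ (20 * k) * μ (ball x r)) := by
          apply mul_le_mul_right
          exact (measure_mono diff_subset).trans (grow_lemma hB hG hD hr hrR x k)
      _ = (ENNReal.ofReal (Real.exp (-((k : ℝ) * r) ^ 2 / (4 * s))) *
            ENNReal.ofReal κ ^ (20 * k)) * μ (ball x r) := by rw [mul_assoc]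
      _ ≤ ENNReal.ofReal (Real.exp C) * ENNReal.ofReal (Real.exp (-1)) ^ k * μ (ball x r) :=
          mul_le_mul_left (hterm k) _
  have hgeom : (∑' k : ℕ, ENNReal.ofReal (Real.exp (-1)) ^ k) ≤ 2 := by
    rw [ENNReal.tsum_geometric]
    have hq : ENNReal.ofReal (Real.exp (-1)) ≤ 2⁻¹ := by
      have h2e : Real.exp (-1) ≤ 2⁻¹ := by
        rw [Real.exp_neg]
        rw [inv_le_inv₀ (Real.exp_pos 1) (by norm_num)]
        linarith [Real.add_one_le_exp 1]
      calc ENNReal.ofReal (Real.exp (-1)) ≤ ENNReal.ofReal 2⁻¹ :=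
            ENNReal.ofReal_le_ofReal h2e
        _ = 2⁻¹ := by
            rw [ENNReal.ofReal_inv_of_pos (by norm_num)]
            norm_num
    calc (1 - ENNReal.ofReal (Real.exp (-1)))⁻¹ ≤ (1 - 2⁻¹)⁻¹ := by
          apply ENNReal.inv_le_inv.2
          exact tsub_le_tsub_left hq 1
      _ = 2 := by rw [ENNReal.one_sub_inv_two]; norm_num
  calc ∫⁻ y, ENNReal.ofReal (Real.exp (-(dist x y) ^ 2 / (4 * s))) ∂μ
      = ∫⁻ y in ⋃ k, A k, ENNReal.ofReal (Real.exp (-(dist x y) ^ 2 / (4 * s))) ∂μ := by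
        rw [hcover, setLIntegral_univ]
    _ ≤ ∑' k : ℕ, ∫⁻ y in A k, ENNReal.ofReal (Real.exp (-(dist x y) ^ 2 / (4 * s))) ∂μ :=
        lintegral_iUnion_le _ _
    _ ≤ ∑' k : ℕ, ENNReal.ofReal (Real.exp C) * ENNReal.ofReal (Real.exp (-1)) ^ k *
          μ (ball x r) := ENNReal.tsum_le_tsum hupper
    _ = ENNReal.ofReal (Real.exp C) * (∑' k : ℕ, ENNReal.ofReal (Real.exp (-1)) ^ k) *
          μ (ball x r) := by
        rw [ENNReal.tsum_mul_right, ENNReal.tsum_mul_left]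
    _ ≤ ENNReal.ofReal (Real.exp C) * 2 * μ (ball x r) := by
        exact mul_le_mul_left (mul_le_mul_right hgeom _) _
    _ = ENNReal.ofReal (2 * Real.exp C) * μ (ball x r) := by
        rw [ENNReal.ofReal_mul (by norm_num : (0:ℝ) ≤ 2)]
        ring_nf
        congr 1
        simp [mul_comm]

end Core
section Main
variable {X : Type*} [MetricSpace X] [MeasurableSpace X] [BorelSpace X]
variable {μ : Measure X} {κ R : ℝ}

lemma lintegral_gauss_lt_top (hB : BallMeasureNontrivial μ) (hG : IsGeodesicSpace X)
    (hD : DoublingAtScale μ κ (ENNReal.ofReal R)) (hκ : 1 ≤ κ)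
    [ProperSpace X] [SigmaFinite μ] (hR : 0 < R) (x : X) {s : ℝ} (hs : 0 < s) :
    ∫⁻ y, ENNReal.ofReal (Real.exp (-(dist x y) ^ 2 / (4 * s))) ∂μ < ⊤ := by
  set r := min (Real.sqrt s) R with hrdef
  have hr0 : 0 < r := lt_min (Real.sqrt_pos.2 hs) hR
  refine (core_bound hB hG hD hκ hs hr0 (min_le_right _ _)).trans_lt ?_
  exact ENNReal.mul_lt_top ENNReal.ofReal_lt_top (hB x r hr0).2

lemma continuous_gauss (x : X) (s : ℝ) :
    Continuous fun y : X => Real.exp (-(dist x y) ^ 2 / (4 * s)) := by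
  have h : Continuous fun y : X => -(dist x y) ^ 2 / (4 * s) :=
    (((continuous_const.dist continuous_id).pow 2).neg).div_const _
  exact Real.continuous_exp.comp h

lemma integrable_gauss (hB : BallMeasureNontrivial μ) (hG : IsGeodesicSpace X)
    (hD : DoublingAtScale μ κ (ENNReal.ofReal R)) (hκ : 1 ≤ κ)
    [ProperSpace X] [SigmaFinite μ] (hR : 0 < R) (x : X) {s : ℝ} (hs : 0 < s) :
    Integrable (fun y => Real.exp (-(dist x y) ^ 2 / (4 * s))) μ := by
  constructor
  · exact (continuous_gauss x s).aestronglyMeasurable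
  · rw [hasFiniteIntegral_iff_ofReal (Eventually.of_forall fun y => (Real.exp_pos _).le)]
    exact lintegral_gauss_lt_top hB hG hD hκ hR x hs

lemma theta_toReal (hB : BallMeasureNontrivial μ) (hG : IsGeodesicSpace X)
    (hD : DoublingAtScale μ κ (ENNReal.ofReal R)) (hκ : 1 ≤ κ)
    [ProperSpace X] [SigmaFinite μ] (hR : 0 < R) (nr : ℝ) (x : X) {s : ℝ} (hs : 0 < s) :
    (Theta μ nr x s).toReal =
      (4 * Real.pi * s) ^ (-(nr / 2)) *
        ∫ y, Real.exp (-(dist x y) ^ 2 / (4 * s)) ∂μ := by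
  have hpre : (0:ℝ) ≤ (4 * Real.pi * s) ^ (-(nr / 2)) :=
    Real.rpow_nonneg (by positivity) _
  rw [Theta, ENNReal.toReal_mul, ENNReal.toReal_ofReal hpre]
  congr 1
  rw [integral_eq_lintegral_of_nonneg_ae (Eventually.of_forall fun y => (Real.exp_pos _).le)
    (continuous_gauss x s).aestronglyMeasurable]

lemma theta_continuousOn (hB : BallMeasureNontrivial μ) (hG : IsGeodesicSpace X)
    (hD : DoublingAtScale μ κ (ENNReal.ofReal R)) (hκ : 1 ≤ κ)
    [ProperSpace X] [SigmaFinite μ] (hR : 0 < R) (nr : ℝ) :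
    ContinuousOn (fun p : ℝ × X => (Theta μ nr p.2 p.1).toReal)
      (Set.Ioi (0 : ℝ) ×ˢ (Set.univ : Set X)) := by
  apply ContinuousOn.congr (f := fun p : ℝ × X =>
    (4 * Real.pi * p.1) ^ (-(nr / 2)) *
      ∫ y, Real.exp (-(dist p.2 y) ^ 2 / (4 * p.1)) ∂μ)
  · intro p hp
    have hs₀ : 0 < p.1 := hp.1
    apply ContinuousAt.continuousWithinAt
    apply ContinuousAt.mul
    · have h1 : ContinuousAt (fun q : ℝ × X => 4 * Real.pi * q.1) p :=
        (continuous_const.mul continuous_fst).continuousAt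
      have h2 : ContinuousAt (fun t : ℝ => t ^ (-(nr / 2))) (4 * Real.pi * p.1) :=
        Real.continuousAt_rpow_const _ _ (Or.inl (by positivity))
      exact ContinuousAt.comp (g := fun t : ℝ => t ^ (-(nr / 2)))
        (f := fun q : ℝ × X => 4 * Real.pi * q.1) h2 h1
    · set s₀ := p.1 with hs₀def
      set x₀ := p.2 with hx₀def
      have h4s₀ : (0:ℝ) < 4 * s₀ := by positivity
      apply continuousAt_of_dominated (bound := fun y =>
        Real.exp (1 / (8 * s₀)) * Real.exp (-(dist x₀ y) ^ 2 / (4 * (4 * s₀))))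
      · exact Eventually.of_forall fun q => (continuous_gauss q.2 q.1).aestronglyMeasurable
      · have hUopen : IsOpen ((Set.Ioo (s₀ / 2) (2 * s₀)) ×ˢ (ball x₀ 1 : Set X)) :=
          isOpen_Ioo.prod isOpen_ball
        have hpU : p ∈ (Set.Ioo (s₀ / 2) (2 * s₀)) ×ˢ (ball x₀ 1 : Set X) := by
          refine ⟨⟨by linarith, by linarith⟩, ?_⟩
          simp [mem_ball, dist_self, hx₀def]
        filter_upwards [hUopen.mem_nhds hpU] with q hq
        apply Eventually.of_forall
        intro y
        obtain ⟨⟨hq1, hq2⟩, hq3⟩ := hq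
        rw [mem_ball] at hq3
        set d := dist q.2 y with hd
        set d₀ := dist x₀ y with hd₀
        have hdd : d₀ ≤ d + 1 := by
          calc d₀ ≤ dist x₀ q.2 + dist q.2 y := dist_triangle _ _ _
            _ ≤ d + 1 := by rw [dist_comm x₀ q.2]; linarith
        have hd0 : 0 ≤ d := dist_nonneg
        have hd₀0 : 0 ≤ d₀ := dist_nonneg
        have hsq : d₀ ^ 2 ≤ 2 * d ^ 2 + 2 := by
          nlinarith [mul_le_mul hdd hdd hd₀0 (by linarith), sq_nonneg (d - 1)]
        rw [Real.norm_eq_abs, Real.abs_exp, ← Real.exp_add]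
        apply Real.exp_le_exp.2
        have hq10 : 0 < q.1 := lt_trans (by linarith) hq1
        have key1 : d ^ 2 / (8 * s₀) ≤ d ^ 2 / (4 * q.1) := by
          apply div_le_div_of_nonneg_left (sq_nonneg d) (by positivity)
          linarith
        have key2 : d₀ ^ 2 / (16 * s₀) ≤ d ^ 2 / (8 * s₀) + 1 / (8 * s₀) := by
          have h1 : d₀ ^ 2 / (16 * s₀) ≤ (2 * d ^ 2 + 2) / (16 * s₀) :=
            (div_le_div_iff_of_pos_right (by positivity)).2 hsq
          have h2 : (2 * d ^ 2 + 2) / (16 * s₀) = d ^ 2 / (8 * s₀) + 1 / (8 * s₀) := by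
            field_simp; ring
          linarith [h1, h2.le, h2.ge]
        have hsplit : -(d₀) ^ 2 / (4 * (4 * s₀)) = -(d₀ ^ 2 / (16 * s₀)) := by ring
        have hlhs : -(d) ^ 2 / (4 * q.1) = -(d ^ 2 / (4 * q.1)) := by ring
        rw [hsplit, hlhs]
        linarith
      · exact (integrable_gauss hB hG hD hκ hR x₀ h4s₀).const_mul _
      · apply Eventually.of_forall
        intro y
        have hnum : Continuous fun q : ℝ × X => -(dist q.2 y) ^ 2 :=
          ((continuous_snd.dist continuous_const).pow 2).neg
        have hden : Continuous fun q : ℝ × X => 4 * q.1 :=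
          continuous_const.mul continuous_fst
        have hdiv : ContinuousAt (fun q : ℝ × X => -(dist q.2 y) ^ 2 / (4 * q.1)) p :=
          ContinuousAt.div hnum.continuousAt hden.continuousAt (by positivity)
        exact Real.continuous_exp.continuousAt.comp hdiv
  · intro p hp
    exact theta_toReal hB hG hD hκ hR nr p.2 hp.1

end Main
/-- On a proper geodesic space, `κ`-doubling at scale `R ∈ (0,∞)`: (i) `Θ_x(s)` is finite
and `(s,x) ↦ Θ_x(s)` is continuous on `(0,∞) × X`; (ii) there is `A > 0` depending only
on `n, κ` with `Θ_x(s) ≤ A·μ(B_{√s}(x))/s^{n/2}` for all `x` and `s ∈ (0,R²]`. -/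
theorem theta_volume_finite_continuous (n : ℕ) (hn : 0 < n) (κ : ℝ) (hκ : 1 ≤ κ) :
    ∃ A : ℝ, 0 < A ∧
      ∀ (X : Type) [MetricSpace X] [MeasurableSpace X] [BorelSpace X]
        (μ : Measure X) (R : ℝ), 0 < R →
        ProperSpace X → BallMeasureNontrivial μ → IsGeodesicSpace X →
        DoublingAtScale μ κ (ENNReal.ofReal R) →
        ((∀ (x : X) (s : ℝ), 0 < s → Theta μ n x s < ⊤) ∧
         ContinuousOn (fun p : ℝ × X => (Theta μ n p.2 p.1).toReal)
           (Set.Ioi (0 : ℝ) ×ˢ (Set.univ : Set X)) ∧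
         (∀ (x : X) (s : ℝ), 0 < s → s ≤ R ^ 2 →
            Theta μ n x s ≤
              ENNReal.ofReal A * μ (ball x (Real.sqrt s)) /
                ENNReal.ofReal (s ^ ((n : ℝ) / 2)))) := by
  refine ⟨2 * Real.exp ((20 * Real.log κ + 1) ^ 2), by positivity, ?_⟩
  intro X _ _ _ μ R hR hP hB hG hD
  haveI : ProperSpace X := hP
  haveI : SigmaFinite μ := sigmaFinite_of_nontrivial μ hB
  refine ⟨?_, ?_, ?_⟩
  · intro x s hs
    rw [Theta]
    exact ENNReal.mul_lt_top ENNReal.ofReal_lt_top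
      (lintegral_gauss_lt_top hB hG hD hκ hR x hs)
  · exact theta_continuousOn hB hG hD hκ hR _
  · intro x s hs hsR
    have hr0 : 0 < Real.sqrt s := Real.sqrt_pos.2 hs
    have hsqrtR : Real.sqrt s ≤ R := by
      rw [show R = Real.sqrt (R ^ 2) by rw [Real.sqrt_sq hR.le]]
      exact Real.sqrt_le_sqrt hsR
    have hcore := core_bound (x := x) hB hG hD hκ hs hr0 hsqrtR
    have hsq : Real.sqrt s ^ 2 = s := Real.sq_sqrt hs.le
    have hexp : (20 * Real.log κ + 1) ^ 2 * s / Real.sqrt s ^ 2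
        = (20 * Real.log κ + 1) ^ 2 := by
      rw [hsq]; field_simp
    rw [hexp] at hcore
    have hpre : ENNReal.ofReal ((4 * Real.pi * s) ^ (-((n : ℝ) / 2)))
        ≤ (ENNReal.ofReal (s ^ ((n : ℝ) / 2)))⁻¹ := by
      have hbase : s ≤ 4 * Real.pi * s := by nlinarith [Real.pi_gt_three, hs]
      have h1 : (4 * Real.pi * s) ^ (-((n : ℝ) / 2)) ≤ s ^ (-((n : ℝ) / 2)) :=
        Real.rpow_le_rpow_of_nonpos hs hbase (neg_nonpos.2 (by positivity))
      have h2 : s ^ (-((n : ℝ) / 2)) = (s ^ ((n : ℝ) / 2))⁻¹ := Real.rpow_neg hs.le _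
      calc ENNReal.ofReal ((4 * Real.pi * s) ^ (-((n : ℝ) / 2)))
          ≤ ENNReal.ofReal (s ^ (-((n : ℝ) / 2))) := ENNReal.ofReal_le_ofReal h1
        _ = (ENNReal.ofReal (s ^ ((n : ℝ) / 2)))⁻¹ := by
            rw [h2, ENNReal.ofReal_inv_of_pos (Real.rpow_pos_of_pos hs _)]
    rw [Theta]
    calc ENNReal.ofReal ((4 * Real.pi * s) ^ (-((n : ℝ) / 2))) *
          ∫⁻ y, ENNReal.ofReal (Real.exp (-(dist x y) ^ 2 / (4 * s))) ∂μ
        ≤ (ENNReal.ofReal (s ^ ((n : ℝ) / 2)))⁻¹ *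
            (ENNReal.ofReal (2 * Real.exp ((20 * Real.log κ + 1) ^ 2)) *
              μ (ball x (Real.sqrt s))) := mul_le_mul' hpre hcore
      _ = ENNReal.ofReal (2 * Real.exp ((20 * Real.log κ + 1) ^ 2)) *
            μ (ball x (Real.sqrt s)) / ENNReal.ofReal (s ^ ((n : ℝ) / 2)) := by
          rw [ENNReal.div_eq_inv_mul]
end

section
/- Let n > 0 be a real number and let (X,d,μ) be a proper geodesic metric measure space that is κ-doubling at scale R ∈ (0,∞). Then there exist constants a > 0 depending only on n and A > 0 depending only on n and κ such that for every x ∈asp X and every s ∈ (0, R²]: a·μ(B_{√s}(x))/s^{n/2} ≤ Θ_x(s) ≤ A·μ(B_{√s}(x))/s^{n/2}. -/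
open MeasureTheory Metric Filter Set
open scoped ENNReal

lemma aux_maximal_separated {X : Type*} [MetricSpace X] (S : Set X) (δ : ℝ) (hδ : 0 < δ) :
    ∃ Z : Set X, Z ⊆ S ∧ (∀ a ∈ Z, ∀ b ∈ Z, a ≠ b → δ ≤ dist a b) ∧
      ∀ z ∈ S, ∃ w ∈ Z, dist z w < δ := by
  set P : Set (Set X) := {T | T ⊆ S ∧ ∀ a ∈ T, ∀ b ∈ T, a ≠ b → δ ≤ dist a b} with hP
  obtain ⟨Z, hZmax⟩ := zorn_subset P (fun c hc hchain => by
    refine ⟨⋃₀ c, ⟨?_, ?_⟩, fun s hs => subset_sUnion_of_mem hs⟩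
    · exact sUnion_subset fun t ht => (hc ht).1
    · rintro a ha b hb hab
      obtain ⟨ta, hta, hata⟩ := ha
      obtain ⟨tb, htb, hbtb⟩ := hb
      rcases hchain.total hta htb with h | h
      · exact (hc htb).2 a (h hata) b hbtb hab
      · exact (hc hta).2 a hata b (h hbtb) hab)
  refine ⟨Z, hZmax.prop.1, hZmax.prop.2, fun z hz => ?_⟩
  by_contra hcon
  push_neg at hcon
  have hzZ : z ∉ Z := fun h => by have := hcon z h; simp at this; linarith
  have : insert z Z ∈ P := by
    constructor
    · exact insert_subset hz hZmax.prop.1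
    · intro a ha b hb hab
      simp only [mem_insert_iff] at ha hb
      rcases ha with rfl | ha <;> rcases hb with rfl | hb
      · simp at hab
      · exact hcon b hb
      · exact dist_comm a _ ▸ hcon a ha
      · exact hZmax.prop.2 a ha b hb hab
  have := hZmax.2 this (subset_insert z Z)
  exact hzZ (this (mem_insert z Z))

lemma aux_geodesic_point {X : Type*} [MetricSpace X] (hgeo : IsGeodesicSpace X) (x y : X)
    (t : ℝ) (ht0 : 0 ≤ t) (ht : t ≤ dist x y) :
    ∃ z : X, dist x z = t ∧ dist z y = dist x y - t := by
  obtain ⟨γ, h0, h1, hiso⟩ := hgeo x y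
  refine ⟨γ t, ?_, ?_⟩
  · have := hiso 0 ⟨le_refl 0, dist_nonneg⟩ t ⟨ht0, ht⟩
    rw [h0] at this
    rw [this]
    rw [abs_of_nonpos (by linarith)]; ring
  · have := hiso t ⟨ht0, ht⟩ (dist x y) ⟨dist_nonneg, le_refl _⟩
    rw [h1] at this
    rw [this, abs_of_nonpos (by linarith)]; ring

lemma aux_triple_doubling {X : Type*} [MetricSpace X] [MeasurableSpace X]
    (μ : Measure X) (κ R : ℝ) (hκ : 1 ≤ κ)
    (hdbl : DoublingAtScale μ κ (ENNReal.ofReal R))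
    (z : X) (r : ℝ) (hr : 0 < r) (hrR : r ≤ R) :
    μ (ball z (2 * r)) ≤ ENNReal.ofReal (κ ^ 3) * μ (ball z (r / 4)) := by
  have hκ0 : (0:ℝ) ≤ κ := by linarith
  have h1 := hdbl z r hr (ENNReal.ofReal_le_ofReal hrR)
  have h2 := hdbl z (r / 2) (by linarith) (ENNReal.ofReal_le_ofReal (by linarith))
  have h3 := hdbl z (r / 4) (by linarith) (ENNReal.ofReal_le_ofReal (by linarith))
  rw [show 2 * (r / 2) = r by ring] at h2
  rw [show 2 * (r / 4) = r / 2 by ring] at h3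
  calc μ (ball z (2 * r)) ≤ ENNReal.ofReal κ * μ (ball z r) := h1
    _ ≤ ENNReal.ofReal κ * (ENNReal.ofReal κ * μ (ball z (r / 2))) :=
        mul_le_mul_right h2 _
    _ ≤ ENNReal.ofReal κ * (ENNReal.ofReal κ * (ENNReal.ofReal κ * μ (ball z (r / 4)))) :=
        mul_le_mul_right (mul_le_mul_right h3 _) _
    _ = ENNReal.ofReal (κ ^ 3) * μ (ball z (r / 4)) := by
        rw [ENNReal.ofReal_pow hκ0]; ring

lemma aux_step {X : Type*} [MetricSpace X] [MeasurableSpace X] [BorelSpace X]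
    (μ : Measure X) (κ R : ℝ) (hκ : 1 ≤ κ)
    (hnt : BallMeasureNontrivial μ) (hgeo : IsGeodesicSpace X)
    (hdbl : DoublingAtScale μ κ (ENNReal.ofReal R))
    (x : X) (r : ℝ) (hr : 0 < r) (hrR : r ≤ R) (m : ℕ) (hm : 1 ≤ m) :
    μ (ball x ((m + 1) * r)) ≤ ENNReal.ofReal (1 + κ ^ 3) * μ (ball x (m * r)) := by
  have hκ0 : (0:ℝ) ≤ κ := by linarith
  have hm1 : (1:ℝ) ≤ (m:ℝ) := by exact_mod_cast hm
  obtain ⟨t₀, ht₀⟩ : ∃ t : ℝ, t = m * r - r / 2 := ⟨_, rfl⟩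
  have hrm : r ≤ m * r := le_mul_of_one_le_left hr.le hm1
  have ht₀pos : 0 < t₀ := by rw [ht₀]; linarith
  obtain ⟨Z, hZS, hZsep, hZnet⟩ :=
    aux_maximal_separated {w : X | dist x w = t₀} (r / 2) (by linarith)
  -- small balls are disjoint and inside ball x (m*r)
  have hdisj : (Z.PairwiseDisjoint fun z => ball z (r / 4)) := by
    intro a ha b hb hab
    exact ball_disjoint_ball (by have := hZsep a ha b hb hab; linarith)
  have hsub : ∀ z ∈ Z, ball z (r / 4) ⊆ ball x (m * r) := by
    intro z hz w hw
    have hxz : dist x z = t₀ := hZS hz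
    have : dist x w ≤ dist x z + dist z w := dist_triangle x z w
    rw [mem_ball] at hw ⊢
    rw [dist_comm w z] at hw
    rw [hxz] at this
    have : dist x w < t₀ + r / 4 := by linarith
    rw [dist_comm]
    nlinarith
  have hballms : μ (ball x (m * r)) < ⊤ := (hnt x (m * r) (by nlinarith)).2
  -- Z is countable
  have hZcount : Z.Countable := by
    have hUnion : μ (⋃ z : Z, ball (z : X) (r / 4)) ≠ ⊤ := by
      refine (lt_of_le_of_lt (measure_mono ?_) hballms).ne
      exact iUnion_subset fun z => hsub z z.2
    have := Measure.countable_meas_pos_of_disjoint_of_meas_iUnion_ne_top μ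
      (As := fun z : Z => ball (z : X) (r / 4))
      (fun z => measurableSet_ball)
      (fun a b hab => hdisj a.2 b.2 (Subtype.coe_ne_coe.mpr hab)) hUnion
    have hall : {z : Z | 0 < μ (ball (z : X) (r / 4))} = univ := by
      ext z; simp [(hnt (z : X) (r / 4) (by linarith)).1]
    rw [hall] at this
    rw [Set.countable_univ_iff] at this
    exact countable_coe_iff.mp this
  -- covering of the annulus
  have hcover : ball x ((m + 1) * r) \ ball x (m * r) ⊆ ⋃ z ∈ Z, ball z (2 * r) := by
    rintro y ⟨hy1, hy2⟩
    rw [mem_ball, dist_comm] at hy1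
    rw [mem_ball, dist_comm, not_lt] at hy2
    obtain ⟨z, hxz, hzy⟩ := aux_geodesic_point hgeo x y t₀ ht₀pos.le (by rw [ht₀]; linarith)
    obtain ⟨w, hwZ, hzw⟩ := hZnet z hxz
    refine mem_biUnion hwZ ?_
    rw [mem_ball]
    have htri : dist y w ≤ dist y z + dist z w := dist_triangle y z w
    rw [dist_comm y z] at htri
    have hzy' : dist z y < 3 * r / 2 := by rw [hzy, ht₀]; linarith
    linarith
  -- assemble
  have hμdiff : μ (ball x ((m + 1) * r) \ ball x (m * r)) ≤
      ENNReal.ofReal (κ ^ 3) * μ (ball x (m * r)) := by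
    calc μ (ball x ((m + 1) * r) \ ball x (m * r))
        ≤ μ (⋃ z ∈ Z, ball z (2 * r)) := measure_mono hcover
      _ ≤ ∑' z : Z, μ (ball (z : X) (2 * r)) := measure_biUnion_le μ hZcount _
      _ ≤ ∑' z : Z, ENNReal.ofReal (κ ^ 3) * μ (ball (z : X) (r / 4)) :=
          ENNReal.tsum_le_tsum fun z =>
            aux_triple_doubling μ κ R hκ hdbl (z : X) r hr hrR
      _ = ENNReal.ofReal (κ ^ 3) * ∑' z : Z, μ (ball (z : X) (r / 4)) :=
          ENNReal.tsum_mul_left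
      _ = ENNReal.ofReal (κ ^ 3) * μ (⋃ z ∈ Z, ball z (r / 4)) := by
          rw [measure_biUnion hZcount hdisj fun z _ => measurableSet_ball]
      _ ≤ ENNReal.ofReal (κ ^ 3) * μ (ball x (m * r)) := by
          gcongr
          exact iUnion₂_subset hsub
  calc μ (ball x ((m + 1) * r))
      ≤ μ (ball x (m * r) ∪ (ball x ((m + 1) * r) \ ball x (m * r))) :=
        measure_mono (fun y hy => by
          by_cases h : y ∈ ball x (m * r)
          · exact Or.inl h
          · exact Or.inr ⟨hy, h⟩)
    _ ≤ μ (ball x (m * r)) + μ (ball x ((m + 1) * r) \ ball x (m * r)) :=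
        measure_union_le _ _
    _ ≤ μ (ball x (m * r)) + ENNReal.ofReal (κ ^ 3) * μ (ball x (m * r)) :=
        add_le_add_right hμdiff _
    _ = ENNReal.ofReal (1 + κ ^ 3) * μ (ball x (m * r)) := by
        rw [ENNReal.ofReal_add zero_le_one (by positivity), ENNReal.ofReal_one,
          add_mul, one_mul]

lemma aux_growth {X : Type*} [MetricSpace X] [MeasurableSpace X] [BorelSpace X]
    (μ : Measure X) (κ R : ℝ) (hκ : 1 ≤ κ)
    (hnt : BallMeasureNontrivial μ) (hgeo : IsGeodesicSpace X)
    (hdbl : DoublingAtScale μ κ (ENNReal.ofReal R))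
    (x : X) (r : ℝ) (hr : 0 < r) (hrR : r ≤ R) (k : ℕ) :
    μ (ball x ((k + 1) * r)) ≤ ENNReal.ofReal ((1 + κ ^ 3) ^ k) * μ (ball x r) := by
  have hκ0 : (0:ℝ) ≤ κ := by linarith
  have hC0 : (0:ℝ) ≤ 1 + κ ^ 3 := by positivity
  induction k with
  | zero => simp
  | succ k ih =>
      have hstep := aux_step μ κ R hκ hnt hgeo hdbl x r hr hrR (k + 1) (Nat.le_add_left 1 k)
      have hcast : ((k + 1 : ℕ) : ℝ) = (k : ℝ) + 1 := by push_cast; ring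
      rw [hcast] at hstep ⊢
      calc μ (ball x (((k : ℝ) + 1 + 1) * r))
          ≤ ENNReal.ofReal (1 + κ ^ 3) * μ (ball x (((k : ℝ) + 1) * r)) := hstep
        _ ≤ ENNReal.ofReal (1 + κ ^ 3) * (ENNReal.ofReal ((1 + κ ^ 3) ^ k) * μ (ball x r)) :=
            mul_le_mul_right ih _
        _ = ENNReal.ofReal ((1 + κ ^ 3) ^ (k + 1)) * μ (ball x r) := by
            rw [← mul_assoc, ← ENNReal.ofReal_mul hC0, pow_succ]; ring_nf

lemma aux_summable (C : ℝ) (hC : 1 ≤ C) :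
    Summable (fun k : ℕ => Real.exp (-(k : ℝ) ^ 2 / 4) * C ^ k) := by
  have hC0 : (0:ℝ) < C := by linarith
  have h1 : Tendsto (fun k : ℕ => (k : ℝ)) atTop atTop := tendsto_natCast_atTop_atTop
  have h2 : Tendsto (fun k : ℕ => (2 * (k:ℝ) + 1) / 4) atTop atTop := by
    apply Tendsto.atTop_div_const (by norm_num : (0:ℝ) < 4)
    exact tendsto_atTop_add_const_right _ 1 (h1.const_mul_atTop two_pos)
  have h3 : Tendsto (fun k : ℕ => Real.exp (-((2 * (k:ℝ) + 1) / 4))) atTop (nhds 0) :=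
    Real.tendsto_exp_atBot.comp (tendsto_neg_atTop_atBot.comp h2)
  have h4 : Tendsto (fun k : ℕ => C * Real.exp (-((2 * (k:ℝ) + 1) / 4))) atTop (nhds 0) := by
    have := h3.const_mul C
    simpa using this
  have h5 : ∀ᶠ k : ℕ in atTop, C * Real.exp (-((2 * (k:ℝ) + 1) / 4)) < 1 / 2 :=
    h4.eventually_lt_const (by norm_num)
  apply summable_of_ratio_norm_eventually_le (r := 1/2) (by norm_num)
  filter_upwards [h5] with k hk
  have hek : (0:ℝ) < Real.exp (-(k : ℝ) ^ 2 / 4) := Real.exp_pos _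
  rw [Real.norm_eq_abs, Real.norm_eq_abs, abs_of_nonneg (by positivity),
    abs_of_nonneg (by positivity)]
  push_cast
  have hsplit : Real.exp (-((k:ℝ) + 1) ^ 2 / 4) =
      Real.exp (-(k : ℝ) ^ 2 / 4) * Real.exp (-((2 * (k:ℝ) + 1) / 4)) := by
    rw [← Real.exp_add]; ring_nf
  rw [hsplit, pow_succ]
  have hCk : (0:ℝ) < C ^ k := pow_pos hC0 k
  calc Real.exp (-(k : ℝ) ^ 2 / 4) * Real.exp (-((2 * (k:ℝ) + 1) / 4)) * (C ^ k * C)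
      = (Real.exp (-(k : ℝ) ^ 2 / 4) * C ^ k) * (C * Real.exp (-((2 * (k:ℝ) + 1) / 4))) := by
        ring
    _ ≤ (Real.exp (-(k : ℝ) ^ 2 / 4) * C ^ k) * (1 / 2) := by
        apply mul_le_mul_of_nonneg_left hk.le (by positivity)
    _ = 1 / 2 * (Real.exp (-(k : ℝ) ^ 2 / 4) * C ^ k) := by ring

/-- Two-sided comparison: `a·μ(B_{√s}(x))/s^{n/2} ≤ Θ_x(s) ≤ A·μ(B_{√s}(x))/s^{n/2}` for
`s ∈ (0,R²]`, where `a` depends only on `n` and `A` only on `n` and `κ`. -/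
theorem theta_volume_two_sided (n : ℝ) (hn : 0 < n) :
    ∃ a : ℝ, 0 < a ∧ ∀ κ : ℝ, 1 ≤ κ → ∃ A : ℝ, 0 < A ∧
      ∀ (X : Type) [MetricSpace X] [MeasurableSpace X] [BorelSpace X]
        (μ : Measure X) (R : ℝ), 0 < R →
        ProperSpace X → BallMeasureNontrivial μ → IsGeodesicSpace X →
        DoublingAtScale μ κ (ENNReal.ofReal R) →
        ∀ (x : X) (s : ℝ), 0 < s → s ≤ R ^ 2 →
          ENNReal.ofReal a * μ (ball x (Real.sqrt s)) / ENNReal.ofReal (s ^ (n / 2)) ≤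
              Theta μ n x s ∧
            Theta μ n x s ≤
              ENNReal.ofReal A * μ (ball x (Real.sqrt s)) / ENNReal.ofReal (s ^ (n / 2)) := by
  have h4π : (0:ℝ) < 4 * Real.pi := by positivity
  have hbase : (0:ℝ) < (4 * Real.pi) ^ (-(n / 2)) := Real.rpow_pos_of_pos h4π _
  refine ⟨(4 * Real.pi) ^ (-(n / 2)) * Real.exp (-(1/4) : ℝ), by positivity, ?_⟩
  intro κ hκ
  have hC1 : (1:ℝ) ≤ 1 + κ ^ 3 := by
    have : (0:ℝ) ≤ κ ^ 3 := pow_nonneg (by linarith) 3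
    linarith
  have hC0 : (0:ℝ) ≤ 1 + κ ^ 3 := by linarith
  have hsum := aux_summable (1 + κ ^ 3) hC1
  have hTpos : 0 < ∑' k : ℕ, Real.exp (-(k : ℝ) ^ 2 / 4) * (1 + κ ^ 3) ^ k := by
    have h0 : Real.exp (-((0:ℕ) : ℝ) ^ 2 / 4) * (1 + κ ^ 3) ^ (0:ℕ) = 1 := by
      simp
    have := Summable.le_tsum hsum 0 (fun i _ => by positivity)
    rw [h0] at this
    linarith
  refine ⟨(4 * Real.pi) ^ (-(n / 2)) *
      ∑' k : ℕ, Real.exp (-(k : ℝ) ^ 2 / 4) * (1 + κ ^ 3) ^ k, by positivity, ?_⟩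
  intro X _ _ _ μ R hR _ hnt hgeo hdbl x s hs hsR
  obtain ⟨r, hrdef⟩ : ∃ t : ℝ, t = Real.sqrt s := ⟨_, rfl⟩
  have hr : 0 < r := hrdef ▸ Real.sqrt_pos.mpr hs
  have hr2 : r ^ 2 = s := hrdef ▸ Real.sq_sqrt hs.le
  have hrR : r ≤ R := by
    rw [hrdef, show R = Real.sqrt (R ^ 2) from (Real.sqrt_sq hR.le).symm]
    exact Real.sqrt_le_sqrt hsR
  -- the integrand
  have hfm : Measurable fun y : X => ENNReal.ofReal (Real.exp (-dist x y ^ 2 / (4 * s))) := by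
    fun_prop
  -- normalization factor
  have hQpos : (0:ℝ) < s ^ (n / 2) := Real.rpow_pos_of_pos hs _
  have hPQ : ENNReal.ofReal ((4 * Real.pi * s) ^ (-(n / 2))) =
      ENNReal.ofReal ((4 * Real.pi) ^ (-(n / 2))) * (ENNReal.ofReal (s ^ (n / 2)))⁻¹ := by
    rw [Real.mul_rpow h4π.le hs.le, ENNReal.ofReal_mul (Real.rpow_nonneg h4π.le _),
      Real.rpow_neg hs.le, ENNReal.ofReal_inv_of_pos hQpos]
  have hTheta : Theta μ n x s =
      ENNReal.ofReal ((4 * Real.pi) ^ (-(n / 2))) * (ENNReal.ofReal (s ^ (n / 2)))⁻¹ *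
        ∫⁻ y, ENNReal.ofReal (Real.exp (-dist x y ^ 2 / (4 * s))) ∂μ := by
    rw [Theta, hPQ]
  constructor
  · -- lower bound
    have hlow : ENNReal.ofReal (Real.exp (-(1/4) : ℝ)) * μ (ball x r) ≤
        ∫⁻ y, ENNReal.ofReal (Real.exp (-dist x y ^ 2 / (4 * s))) ∂μ := by
      calc ENNReal.ofReal (Real.exp (-(1/4) : ℝ)) * μ (ball x r)
          = ∫⁻ _ in ball x r, ENNReal.ofReal (Real.exp (-(1/4) : ℝ)) ∂μ :=
            (setLIntegral_const _ _).symm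
        _ ≤ ∫⁻ y in ball x r, ENNReal.ofReal (Real.exp (-dist x y ^ 2 / (4 * s))) ∂μ := by
            refine setLIntegral_mono hfm fun y hy => ?_
            apply ENNReal.ofReal_le_ofReal
            apply Real.exp_le_exp.mpr
            have h1 : dist x y < r := by rw [dist_comm]; exact mem_ball.mp hy
            have h2 : dist x y ^ 2 ≤ s := by nlinarith [dist_nonneg (x := x) (y := y)]
            rw [neg_div, neg_le_neg_iff, div_le_div_iff₀ (by positivity) (by norm_num)]
            nlinarith
        _ ≤ _ := setLIntegral_le_lintegral _ _
    rw [hTheta, ← hrdef]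
    have hsplit : ENNReal.ofReal ((4 * Real.pi) ^ (-(n / 2)) * Real.exp (-(1/4) : ℝ)) *
          μ (ball x r) / ENNReal.ofReal (s ^ (n / 2)) =
        ENNReal.ofReal ((4 * Real.pi) ^ (-(n / 2))) * (ENNReal.ofReal (s ^ (n / 2)))⁻¹ *
          (ENNReal.ofReal (Real.exp (-(1/4) : ℝ)) * μ (ball x r)) := by
      rw [ENNReal.ofReal_mul hbase.le, div_eq_mul_inv]; ring
    rw [hsplit]
    exact mul_le_mul_right hlow _
  · -- upper bound
    obtain ⟨A, hAdef⟩ :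
        ∃ B : ℕ → Set X, B = fun k : ℕ => ball x (((k:ℝ) + 1) * r) \ ball x ((k:ℝ) * r) :=
      ⟨_, rfl⟩
    have hAm : ∀ k, MeasurableSet (A k) := by
      intro k; rw [hAdef]; exact measurableSet_ball.diff measurableSet_ball
    have hkey : ∀ k l : ℕ, k < l → Disjoint (A k) (A l) := by
      intro k l h
      rw [Set.disjoint_left, hAdef]
      rintro y ⟨hy1, _⟩ ⟨_, hy4⟩
      apply hy4
      refine mem_ball.mpr (lt_of_lt_of_le (mem_ball.mp hy1) ?_)
      have : ((k:ℝ) + 1) ≤ (l:ℝ) := by exact_mod_cast h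
      nlinarith
    have hAdisj : Pairwise (Function.onFun Disjoint A) := by
      intro k l hkl
      rcases hkl.lt_or_gt with h | h
      · exact hkey k l h
      · exact (hkey l k h).symm
    have hAcover : ⋃ k, A k = univ := by
      ext y
      simp only [mem_iUnion, mem_univ, iff_true]
      refine ⟨⌊dist y x / r⌋₊, ?_⟩
      rw [hAdef]
      refine ⟨?_, ?_⟩
      · rw [mem_ball]
        have := Nat.lt_floor_add_one (dist y x / r)
        calc dist y x = dist y x / r * r := by field_simp
          _ < (⌊dist y x / r⌋₊ + 1) * r := by
              apply mul_lt_mul_of_pos_right this hr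
      · rw [mem_ball, not_lt]
        have := Nat.floor_le (div_nonneg dist_nonneg hr.le) (R := ℝ) (a := dist y x / r)
        calc (⌊dist y x / r⌋₊ : ℝ) * r ≤ dist y x / r * r :=
              mul_le_mul_of_nonneg_right this hr.le
          _ = dist y x := by field_simp
    have hterm : ∀ k : ℕ,
        ∫⁻ y in A k, ENNReal.ofReal (Real.exp (-dist x y ^ 2 / (4 * s))) ∂μ ≤
          ENNReal.ofReal (Real.exp (-(k : ℝ) ^ 2 / 4) * (1 + κ ^ 3) ^ k) * μ (ball x r) := by
      intro k
      have hmuA : μ (A k) ≤ ENNReal.ofReal ((1 + κ ^ 3) ^ k) * μ (ball x r) := by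
        calc μ (A k) ≤ μ (ball x ((k + 1) * r)) := by
              rw [hAdef]; exact measure_mono diff_subset
          _ ≤ _ := aux_growth μ κ R hκ hnt hgeo hdbl x r hr hrR k
      calc ∫⁻ y in A k, ENNReal.ofReal (Real.exp (-dist x y ^ 2 / (4 * s))) ∂μ
          ≤ ∫⁻ _ in A k, ENNReal.ofReal (Real.exp (-(k : ℝ) ^ 2 / 4)) ∂μ := by
            refine setLIntegral_mono measurable_const fun y hy => ?_
            apply ENNReal.ofReal_le_ofReal
            apply Real.exp_le_exp.mpr
            rw [hAdef] at hy
            obtain ⟨_, hy2⟩ := hy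
            rw [mem_ball, not_lt] at hy2
            have hd : (k : ℝ) * r ≤ dist x y := by rw [dist_comm]; exact hy2
            have hk0 : (0:ℝ) ≤ (k : ℝ) := Nat.cast_nonneg k
            have h0 : (k:ℝ) * r * ((k:ℝ) * r) ≤ dist x y * dist x y :=
              mul_le_mul hd hd (mul_nonneg hk0 hr.le) dist_nonneg
            have hd2 : (k : ℝ) ^ 2 * s ≤ dist x y ^ 2 := by nlinarith [h0, hr2, sq_nonneg (k:ℝ)]
            rw [neg_div, neg_div, neg_le_neg_iff, div_le_div_iff₀ (by norm_num) (by positivity)]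
            nlinarith
        _ = ENNReal.ofReal (Real.exp (-(k : ℝ) ^ 2 / 4)) * μ (A k) := setLIntegral_const _ _
        _ ≤ ENNReal.ofReal (Real.exp (-(k : ℝ) ^ 2 / 4)) *
              (ENNReal.ofReal ((1 + κ ^ 3) ^ k) * μ (ball x r)) := mul_le_mul_right hmuA _
        _ = ENNReal.ofReal (Real.exp (-(k : ℝ) ^ 2 / 4) * (1 + κ ^ 3) ^ k) * μ (ball x r) := by
            rw [ENNReal.ofReal_mul (Real.exp_nonneg _), mul_assoc]
    have hub : ∫⁻ y, ENNReal.ofReal (Real.exp (-dist x y ^ 2 / (4 * s))) ∂μ ≤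
        ENNReal.ofReal (∑' k : ℕ, Real.exp (-(k : ℝ) ^ 2 / 4) * (1 + κ ^ 3) ^ k) *
          μ (ball x r) := by
      calc ∫⁻ y, ENNReal.ofReal (Real.exp (-dist x y ^ 2 / (4 * s))) ∂μ
          = ∫⁻ y in ⋃ k, A k, ENNReal.ofReal (Real.exp (-dist x y ^ 2 / (4 * s))) ∂μ := by
            rw [hAcover, setLIntegral_univ]
        _ = ∑' k : ℕ, ∫⁻ y in A k, ENNReal.ofReal (Real.exp (-dist x y ^ 2 / (4 * s))) ∂μ :=
            lintegral_iUnion hAm hAdisj _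
        _ ≤ ∑' k : ℕ, ENNReal.ofReal (Real.exp (-(k : ℝ) ^ 2 / 4) * (1 + κ ^ 3) ^ k) *
              μ (ball x r) := ENNReal.tsum_le_tsum hterm
        _ = (∑' k : ℕ, ENNReal.ofReal (Real.exp (-(k : ℝ) ^ 2 / 4) * (1 + κ ^ 3) ^ k)) *
              μ (ball x r) := ENNReal.tsum_mul_right
        _ = _ := by
            rw [ENNReal.ofReal_tsum_of_nonneg (fun k => by positivity) hsum]
    rw [hTheta, ← hrdef]
    have hsplit : ENNReal.ofReal ((4 * Real.pi) ^ (-(n / 2)) *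
          ∑' k : ℕ, Real.exp (-(k : ℝ) ^ 2 / 4) * (1 + κ ^ 3) ^ k) *
          μ (ball x r) / ENNReal.ofReal (s ^ (n / 2)) =
        ENNReal.ofReal ((4 * Real.pi) ^ (-(n / 2))) * (ENNReal.ofReal (s ^ (n / 2)))⁻¹ *
          (ENNReal.ofReal (∑' k : ℕ, Real.exp (-(k : ℝ) ^ 2 / 4) * (1 + κ ^ 3) ^ k) *
            μ (ball x r)) := by
      rw [ENNReal.ofReal_mul hbase.le, div_eq_mul_inv]; ring
    rw [hsplit]
    exact mul_le_mul_right hub _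
end

section
/- Let (X,d,μ) be a proper metric measure space, let x ∈ X, and let T > 0, ν > 2 and λ > 0. Assume: (a) there exist c, Q > 0 such that μ(B_τ(x)) ≥ c·τ^Q for every τ ∈ (0, √T]; (b) for every r ∈ (0, √T] and every Lipschitz function φ : X → ℝ with compact support contained in B_r(x), the Sobolev inequality ( ∫_{B_r(x)} |φ|^{2ν/(ν−2)} dμ )^{1−2/ν} ≤ λ·r²·μ(B_r(x))^{−2/ν}·( ∫_{B_r(x)} (Lip φ)² dμ + r^{−2} ∫_{B_r(x)} |φ|² dμ ) holds. Then for all 0 < s ≤ r ≤ √T: μ(B_r(x))/r^ν ≤ (2^{ν+1}λ)^{ν/2} · μ(B_s(x))/s^ν. -/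
open MeasureTheory Metric Filter Set
open scoped ENNReal NNReal

/-- The local Lipschitz constant `Lip φ(y) = limsup_{z→y} |φ(y) − φ(z)|/d(y,z)`
(equal to `0` at isolated points, where the punctured neighbourhood filter is trivial). -/
noncomputable def locLip {X : Type*} [MetricSpace X] (φ : X → ℝ) (y : X) : ℝ :=
  Filter.limsup (fun z => |φ y - φ z| / dist y z) (nhdsWithin y ({y}ᶜ : Set X))


section AuxLocLip
variable {X : Type*} [MetricSpace X] {φ : X → ℝ} {y : X} {K : ℝ≥0}

omit [MetricSpace X] in
lemma real_limsup_bot (u : X → ℝ) : Filter.limsup u (⊥ : Filter X) = 0 := by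
  rw [Filter.limsup, Filter.map_bot, Filter.limsSup]
  have h : {a : ℝ | ∀ᶠ n in (⊥ : Filter ℝ), n ≤ a} = Set.univ := by
    ext a; simp
  rw [h]
  exact Real.sInf_of_not_bddBelow (fun ⟨b, hb⟩ => by
    have := hb (Set.mem_univ (b - 1)); linarith)

lemma locLip_bddAbove (hφ : LipschitzWith K φ) :
    ∀ᶠ z in nhdsWithin y ({y}ᶜ : Set X), |φ y - φ z| / dist y z ≤ (K : ℝ) := by
  refine Filter.eventually_of_mem self_mem_nhdsWithin (fun z hz => ?_)
  have hd : (0:ℝ) < dist y z := dist_pos.2 (fun h => hz (by simp [h.symm]))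
  rw [div_le_iff₀ hd]
  have := hφ.dist_le_mul y z
  rwa [Real.dist_eq] at this

lemma locLip_le (hφ : LipschitzWith K φ) (y : X) : locLip φ y ≤ (K : ℝ) := by
  rcases eq_or_neBot (nhdsWithin y ({y}ᶜ : Set X)) with h | h
  · rw [locLip, h, real_limsup_bot]; exact K.coe_nonneg
  · exact Filter.limsup_le_of_le
      (Filter.isCoboundedUnder_le_of_le _ (fun z => div_nonneg (abs_nonneg _) dist_nonneg))
      (locLip_bddAbove hφ)

lemma locLip_nonneg (hφ : LipschitzWith K φ) (y : X) : 0 ≤ locLip φ y := by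
  rcases eq_or_neBot (nhdsWithin y ({y}ᶜ : Set X)) with h | h
  · rw [locLip, h, real_limsup_bot]
  · exact Filter.le_limsup_of_frequently_le
      (Filter.Eventually.frequently (Filter.Eventually.of_forall (fun z =>
        div_nonneg (abs_nonneg _) dist_nonneg)))
      ⟨(K:ℝ), Filter.eventually_map.2 (locLip_bddAbove hφ)⟩

lemma locLip_eq_zero_of_eventuallyEq (h : ∀ᶠ z in nhdsWithin y ({y}ᶜ : Set X), φ z = φ y) :
    locLip φ y = 0 := by
  rcases eq_or_neBot (nhdsWithin y ({y}ᶜ : Set X)) with hb | hb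
  · rw [locLip, hb, real_limsup_bot]
  · rw [locLip, Filter.limsup_congr (h.mono (fun z hz => by
      rw [hz, sub_self, abs_zero, zero_div]))]
    exact Filter.limsup_const 0

end AuxLocLip

section AuxCutoff
variable {X : Type*} [MetricSpace X]

/-- cutoff function: 1 on `ball x a`, 0 outside `closedBall x b`. -/
noncomputable def cutoff (x : X) (a b : ℝ) : X → ℝ :=
  fun y => max 0 (min 1 ((b - dist x y) / (b - a)))

variable {x : X} {a b : ℝ}

lemma cutoff_nonneg (y : X) : 0 ≤ cutoff x a b y := le_max_left _ _

lemma cutoff_le_one (y : X) : cutoff x a b y ≤ 1 := by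
  apply max_le zero_le_one (min_le_left _ _)

lemma cutoff_abs_le_one (y : X) : |cutoff x a b y| ≤ 1 := by
  rw [abs_of_nonneg (cutoff_nonneg y)]; exact cutoff_le_one y

lemma cutoff_eq_one (hab : a < b) (y : X) (h : dist x y ≤ a) : cutoff x a b y = 1 := by
  have h1 : (1:ℝ) ≤ (b - dist x y) / (b - a) := by
    rw [le_div_iff₀ (by linarith)]
    linarith
  rw [cutoff, min_eq_left h1, max_eq_right zero_le_one]

lemma cutoff_eq_zero (hab : a < b) (y : X) (h : b ≤ dist x y) : cutoff x a b y = 0 := by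
  have h1 : (b - dist x y) / (b - a) ≤ 0 := by
    apply div_nonpos_of_nonpos_of_nonneg <;> linarith
  rw [cutoff, max_eq_left (le_trans (min_le_right _ _) h1)]

lemma cutoff_lipschitz (hab : a < b) :
    LipschitzWith ((b - a)⁻¹).toNNReal (cutoff x a b) := by
  apply LipschitzWith.of_dist_le_mul
  intro y z
  rw [Real.dist_eq]
  have key : |cutoff x a b y - cutoff x a b z| ≤
      |(b - dist x y) / (b - a) - (b - dist x z) / (b - a)| := by
    refine le_trans ?_ (le_trans (abs_min_sub_min_le_max 1 ((b - dist x y)/(b-a)) 1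
      ((b - dist x z)/(b-a))) ?_)
    · rw [cutoff, cutoff, max_comm 0 _, max_comm 0 _]
      exact abs_max_sub_max_le_abs _ _ _
    · simp
  refine key.trans ?_
  rw [div_sub_div_same, abs_div, abs_of_pos (by linarith : (0:ℝ) < b - a)]
  have h2 : |b - dist x y - (b - dist x z)| = |dist x z - dist x y| := by
    congr 1; ring
  rw [h2, div_eq_inv_mul, Real.coe_toNNReal _ (inv_nonneg.2 (by linarith))]
  have h3 : |dist x z - dist x y| ≤ dist y z := by
    have := abs_dist_sub_le z y x
    rwa [dist_comm z x, dist_comm y x, dist_comm z y] at this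
  exact mul_le_mul_of_nonneg_left h3 (inv_nonneg.2 (by linarith))

lemma cutoff_support (hab : a < b) : Function.support (cutoff x a b) ⊆ closedBall x b := by
  intro y hy
  rw [Function.mem_support] at hy
  by_contra h
  exact hy (cutoff_eq_zero hab y (le_of_lt (by simpa [mem_closedBall, dist_comm] using h)))

end AuxCutoff

lemma ratio_key {r t W : ℝ} (ht : 0 < t) (hr : 0 < r) (htr : 2*t ≤ r) (hW0 : 0 ≤ W) :
    r ^ 2 * ((5/(4*t))^2 * W + W / r ^ 2) ≤ 2 * (r/t)^2 * W := by
  have h1 : r ^ 2 * ((5/(4*t))^2 * W + W / r ^ 2) = 25*r^2*W/(16*t^2) + W := by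
    field_simp; ring
  have h2 : 2 * (r/t)^2 * W = 2*r^2*W/t^2 := by
    field_simp
  rw [h1, h2]
  rw [div_add' _ _ _ (by positivity), div_le_div_iff₀ (by positivity) (by positivity)]
  have h4 : 4*(t^2) ≤ r^2 := by nlinarith [sq_nonneg (r - 2*t)]
  have h5 : 4*(t^2) * (W * t^2) ≤ r^2 * (W * t^2) :=
    mul_le_mul_of_nonneg_right h4 (mul_nonneg hW0 (sq_nonneg t))
  nlinarith [mul_nonneg hW0 (mul_nonneg (sq_nonneg t) (sq_nonneg t)), h5]

lemma sobolev_step {X : Type*} [MetricSpace X] [MeasurableSpace X] [BorelSpace X] [ProperSpace X]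
    (μ : Measure X) (hball : BallMeasureNontrivial μ) (x : X) (ν lam : ℝ)
    (hν : 2 < ν) (hlam : 0 < lam) (r : ℝ) (hr : 0 < r)
    (hSob1 : ∀ φ : X → ℝ,
      (∃ K : ℝ≥0, LipschitzWith K φ) → HasCompactSupport φ → tsupport φ ⊆ ball x r →
      (∫ y in ball x r, |φ y| ^ (2 * ν / (ν - 2)) ∂μ) ^ (1 - 2 / ν) ≤
        lam * r ^ 2 * (μ (ball x r)).toReal ^ (-(2 / ν)) *
          ((∫ y in ball x r, locLip φ y ^ 2 ∂μ) +
            (∫ y in ball x r, |φ y| ^ 2 ∂μ) / r ^ 2))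
    (t : ℝ) (ht : 0 < t) (htr : 2 * t ≤ r) :
    (μ (ball x t)).toReal ^ (1 - 2/ν) ≤
      2 * lam * (r / t) ^ 2 * (μ (ball x r)).toReal ^ (-(2/ν)) * (μ (ball x (2*t))).toReal := by
  have hab : t < 9*t/5 := by linarith
  have hb2t : 9*t/5 < 2*t := by linarith
  have hbr : 9*t/5 < r := by linarith
  set φ : X → ℝ := cutoff x t (9*t/5) with hφdef
  set K : ℝ≥0 := ((9*t/5 - t)⁻¹).toNNReal with hKdef
  have hKcoe : (K : ℝ) = 5/(4*t) := by
    rw [hKdef, Real.coe_toNNReal _ (inv_nonneg.2 (by linarith))]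
    rw [show 9*t/5 - t = 4*t/5 by ring]
    rw [inv_div]
  have hLip : LipschitzWith K φ := cutoff_lipschitz hab
  have hcs : HasCompactSupport φ :=
    HasCompactSupport.intro (isCompact_closedBall x (9*t/5))
      (fun y hy => cutoff_eq_zero hab y (le_of_lt (by
        simpa [mem_closedBall, dist_comm] using hy)))
  have hts : tsupport φ ⊆ ball x r :=
    (closure_minimal (cutoff_support hab) isClosed_closedBall).trans
      (closedBall_subset_ball hbr)
  have hS := hSob1 φ ⟨K, hLip⟩ hcs hts
  set Vt := (μ (ball x t)).toReal with hVt
  set Vr := (μ (ball x r)).toReal with hVr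
  set W := (μ (ball x (2*t))).toReal with hW
  have hWfin : μ (ball x (2*t)) ≠ ⊤ := (hball x (2*t) (by linarith)).2.ne
  have hrfin : μ (ball x r) ≠ ⊤ := (hball x r hr).2.ne
  have hW0 : 0 ≤ W := ENNReal.toReal_nonneg
  have hp : 0 ≤ 2 * ν / (ν - 2) := div_nonneg (by linarith) (by linarith)
  have hθ : 0 ≤ 1 - 2/ν := by
    have : 2/ν < 1 := (div_lt_one (by linarith)).2 (by linarith)
    linarith
  have hmono_cb : closedBall x (9*t/5) ∩ ball x r ⊆ ball x (2*t) := by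
    intro y hy
    rcases hy with ⟨h1, _⟩
    rw [mem_closedBall] at h1
    exact mem_ball.2 (by rw [dist_comm] at h1 ⊢; linarith)
  have hintp : IntegrableOn (fun y => |φ y| ^ (2 * ν / (ν - 2))) (ball x r) μ := by
    refine Integrable.mono'
      (integrableOn_const (hball x r hr).2.ne enorm_ne_top : IntegrableOn (fun _ => (1:ℝ)) (ball x r) μ)
      ?_ ?_
    · refine Continuous.aestronglyMeasurable ?_
      refine Continuous.rpow_const (continuous_abs.comp hLip.continuous) (fun y => Or.inr hp)
    · refine Filter.Eventually.of_forall (fun y => ?_)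
      rw [Real.norm_eq_abs, abs_of_nonneg (Real.rpow_nonneg (abs_nonneg _) _)]
      exact Real.rpow_le_one (abs_nonneg _) (cutoff_abs_le_one y) hp
  have hLHS : Vt ≤ ∫ y in ball x r, |φ y| ^ (2 * ν / (ν - 2)) ∂μ := by
    have h1 : Vt = ∫ _ in ball x t, (1:ℝ) ∂μ := by
      rw [setIntegral_const]; simp [hVt, measureReal_def]
    have h2 : ∫ _ in ball x t, (1:ℝ) ∂μ = ∫ y in ball x t, |φ y| ^ (2 * ν / (ν - 2)) ∂μ := by
      refine setIntegral_congr_fun measurableSet_ball (fun y hy => ?_)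
      rw [hφdef, cutoff_eq_one hab y (le_of_lt (by rwa [mem_ball, dist_comm] at hy))]
      norm_num
    rw [h1, h2]
    refine setIntegral_mono_set hintp ?_ ?_
    · exact Filter.Eventually.of_forall (fun y => Real.rpow_nonneg (abs_nonneg _) _)
    · exact HasSubset.Subset.eventuallyLE (ball_subset_ball (by linarith))
  have hI1 : (∫ y in ball x r, locLip φ y ^ 2 ∂μ) ≤ (K:ℝ)^2 * W := by
    have hg : IntegrableOn ((closedBall x (9*t/5)).indicator (fun _ => (K:ℝ)^2))
        (ball x r) μ :=
      (integrableOn_const (hball x r hr).2.ne enorm_ne_top).indicator measurableSet_closedBall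
    have hfg : ∀ y, locLip φ y ^ 2 ≤
        (closedBall x (9*t/5)).indicator (fun _ => (K:ℝ)^2) y := by
      intro y
      by_cases hy : y ∈ closedBall x (9*t/5)
      · rw [Set.indicator_of_mem hy]
        exact pow_le_pow_left₀ (locLip_nonneg hLip y) (locLip_le hLip y) 2
      · rw [Set.indicator_of_notMem hy]
        have hz : locLip φ y = 0 := by
          refine locLip_eq_zero_of_eventuallyEq ?_
          have hopen : IsOpen (closedBall x (9*t/5))ᶜ := isClosed_closedBall.isOpen_compl
          have hev : ∀ᶠ z in nhdsWithin y ({y}ᶜ : Set X), z ∈ (closedBall x (9*t/5))ᶜ :=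
            Filter.Eventually.filter_mono nhdsWithin_le_nhds (hopen.mem_nhds hy)
          have hy0 : φ y = 0 := cutoff_eq_zero hab y
            (le_of_lt (by simpa [mem_closedBall, dist_comm] using hy))
          refine hev.mono (fun z hz => ?_)
          rw [hy0]
          exact cutoff_eq_zero hab z (le_of_lt (by simpa [mem_closedBall, dist_comm] using hz))
        rw [hz]; norm_num
    calc (∫ y in ball x r, locLip φ y ^ 2 ∂μ)
        ≤ ∫ y in ball x r, (closedBall x (9*t/5)).indicator (fun _ => (K:ℝ)^2) y ∂μ := by
          refine integral_mono_of_nonneg ?_ hg ?_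
          · exact Filter.Eventually.of_forall (fun y => sq_nonneg _)
          · exact Filter.Eventually.of_forall hfg
      _ = ((μ.restrict (ball x r)) (closedBall x (9*t/5))).toReal * (K:ℝ)^2 := by
          rw [integral_indicator_const _ measurableSet_closedBall]; simp [smul_eq_mul, measureReal_def]
      _ ≤ W * (K:ℝ)^2 := by
          refine mul_le_mul_of_nonneg_right ?_ (sq_nonneg _)
          rw [Measure.restrict_apply measurableSet_closedBall]
          exact ENNReal.toReal_mono hWfin (measure_mono hmono_cb)
      _ = (K:ℝ)^2 * W := mul_comm _ _
  have hI2 : (∫ y in ball x r, |φ y| ^ 2 ∂μ) ≤ W := by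
    have hg : IntegrableOn ((closedBall x (9*t/5)).indicator (fun _ => (1:ℝ)))
        (ball x r) μ :=
      (integrableOn_const (hball x r hr).2.ne enorm_ne_top).indicator measurableSet_closedBall
    have hfg : ∀ y, |φ y| ^ 2 ≤ (closedBall x (9*t/5)).indicator (fun _ => (1:ℝ)) y := by
      intro y
      by_cases hy : y ∈ closedBall x (9*t/5)
      · rw [Set.indicator_of_mem hy]
        exact pow_le_one₀ (abs_nonneg _) (cutoff_abs_le_one y)
      · rw [Set.indicator_of_notMem hy]
        have hy0 : φ y = 0 := cutoff_eq_zero hab y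
          (le_of_lt (by simpa [mem_closedBall, dist_comm] using hy))
        rw [hy0]; norm_num
    calc (∫ y in ball x r, |φ y| ^ 2 ∂μ)
        ≤ ∫ y in ball x r, (closedBall x (9*t/5)).indicator (fun _ => (1:ℝ)) y ∂μ := by
          refine integral_mono_of_nonneg ?_ hg ?_
          · exact Filter.Eventually.of_forall (fun y => sq_nonneg _)
          · exact Filter.Eventually.of_forall hfg
      _ = ((μ.restrict (ball x r)) (closedBall x (9*t/5))).toReal * 1 := by
          rw [integral_indicator_const _ measurableSet_closedBall]; simp [smul_eq_mul, measureReal_def]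
      _ ≤ W := by
          rw [mul_one, Measure.restrict_apply measurableSet_closedBall]
          exact ENNReal.toReal_mono hWfin (measure_mono hmono_cb)
  have hVt0 : 0 ≤ Vt := ENNReal.toReal_nonneg
  have hVr0 : 0 ≤ Vr := ENNReal.toReal_nonneg
  clear_value Vt Vr W
  have hVr' : 0 ≤ Vr ^ (-(2/ν)) := Real.rpow_nonneg hVr0 _
  have step1 : Vt ^ (1 - 2/ν) ≤
      (∫ y in ball x r, |φ y| ^ (2 * ν / (ν - 2)) ∂μ) ^ (1 - 2/ν) :=
    Real.rpow_le_rpow hVt0 hLHS hθ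
  have step2 : lam * r ^ 2 * Vr ^ (-(2 / ν)) *
      ((∫ y in ball x r, locLip φ y ^ 2 ∂μ) + (∫ y in ball x r, |φ y| ^ 2 ∂μ) / r ^ 2) ≤
      lam * r ^ 2 * Vr ^ (-(2 / ν)) * ((K:ℝ)^2 * W + W / r ^ 2) := by
    refine mul_le_mul_of_nonneg_left ?_ (by positivity)
    refine add_le_add hI1 ?_
    exact div_le_div_of_nonneg_right hI2 (by positivity) |>.trans_eq rfl
  have step3 : lam * r ^ 2 * Vr ^ (-(2 / ν)) * ((K:ℝ)^2 * W + W / r ^ 2) ≤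
      2 * lam * (r / t) ^ 2 * Vr ^ (-(2/ν)) * W := by
    rw [hKcoe]
    have hkey := ratio_key ht hr htr hW0
    calc lam * r ^ 2 * Vr ^ (-(2 / ν)) * ((5/(4*t))^2 * W + W / r ^ 2)
        = (lam * Vr ^ (-(2/ν))) * (r ^ 2 * ((5/(4*t))^2 * W + W / r ^ 2)) := by ring
      _ ≤ (lam * Vr ^ (-(2/ν))) * (2 * (r/t)^2 * W) :=
          mul_le_mul_of_nonneg_left hkey (by positivity)
      _ = 2 * lam * (r / t) ^ 2 * Vr ^ (-(2/ν)) * W := by ring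
  exact step1.trans (hS.trans (step2.trans step3))

lemma iterate_log (θ : ℝ) (hθ0 : 0 < θ) (hθ1 : θ < 1) (L : ℕ → ℝ) (K0 c2 D E : ℝ)
    (hrec : ∀ m : ℕ, θ * L (m+1) ≤ (K0 + ((m:ℝ)+1)*c2) + L m)
    (hDE : ∀ m : ℕ, D - (m:ℝ)*E ≤ L m) (hL0 : ∀ m, L m ≤ 0) :
    -((1-θ)⁻¹*(K0+c2) + θ/(1-θ)^2*c2) ≤ L 0 := by
  have hiter : ∀ M : ℕ,
      θ^M * L M - ∑ j ∈ Finset.range M, θ^j*(K0 + ((j:ℝ)+1)*c2) ≤ L 0 := by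
    intro M
    induction M with
    | zero => simp
    | succ M ih =>
      have h1 : θ^M*(θ*L (M+1)) ≤ θ^M*((K0 + ((M:ℝ)+1)*c2) + L M) :=
        mul_le_mul_of_nonneg_left (hrec M) (pow_nonneg hθ0.le M)
      rw [Finset.sum_range_succ]
      have h2 : θ^(M+1)*L (M+1) = θ^M*(θ*L (M+1)) := by ring
      have h3 : θ^M*((K0 + ((M:ℝ)+1)*c2) + L M)
          = θ^M*(K0 + ((M:ℝ)+1)*c2) + θ^M*(L M) := by ring
      linarith
  have h1 : HasSum (fun j : ℕ => θ^j) (1-θ)⁻¹ := hasSum_geometric_of_lt_one hθ0.le hθ1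
  have h2 : HasSum (fun j : ℕ => (j:ℝ)*θ^j) (θ/(1-θ)^2) :=
    hasSum_coe_mul_geometric_of_norm_lt_one
      (by rwa [Real.norm_eq_abs, abs_of_pos hθ0])
  have hsum : HasSum (fun j : ℕ => θ^j*(K0 + ((j:ℝ)+1)*c2))
      ((1-θ)⁻¹*(K0+c2) + θ/(1-θ)^2*c2) := by
    have h3 := (h1.mul_right (K0+c2)).add (h2.mul_right c2)
    have hfun : (fun j : ℕ => θ^j*(K0 + ((j:ℝ)+1)*c2)) =
        fun j : ℕ => θ^j*(K0+c2) + (j:ℝ)*θ^j*c2 := by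
      funext j
      ring
    rw [hfun]
    exact h3
  have htends1 : Filter.Tendsto (fun M : ℕ => ∑ j ∈ Finset.range M, θ^j*(K0+((j:ℝ)+1)*c2))
      Filter.atTop (nhds ((1-θ)⁻¹*(K0+c2) + θ/(1-θ)^2*c2)) := hsum.tendsto_sum_nat
  have hn0 : Filter.Tendsto (fun M : ℕ => (M:ℝ)*θ^M) Filter.atTop (nhds 0) :=
    h2.summable.tendsto_atTop_zero
  have hp0 : Filter.Tendsto (fun M : ℕ => θ^M) Filter.atTop (nhds 0) :=
    tendsto_pow_atTop_nhds_zero_of_lt_one hθ0.le hθ1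
  have hlow : Filter.Tendsto (fun M : ℕ => θ^M*D - ((M:ℝ)*θ^M)*E) Filter.atTop (nhds 0) := by
    have := (hp0.mul_const D).sub (hn0.mul_const E)
    simpa using this
  have hsq : Filter.Tendsto (fun M : ℕ => θ^M * L M) Filter.atTop (nhds 0) := by
    refine tendsto_of_tendsto_of_tendsto_of_le_of_le hlow tendsto_const_nhds ?_ ?_
    · intro M
      have h4 := mul_le_mul_of_nonneg_left (hDE M) (pow_nonneg hθ0.le M)
      have h5 : θ^M*(D - (M:ℝ)*E) = θ^M*D - ((M:ℝ)*θ^M)*E := by ring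
      show θ^M*D - ((M:ℝ)*θ^M)*E ≤ θ^M * L M
      linarith
    · intro M
      exact mul_nonpos_iff.2 (Or.inl ⟨pow_nonneg hθ0.le M, hL0 M⟩)
  have hfin := le_of_tendsto (hsq.sub htends1) (Filter.Eventually.of_forall hiter)
  linarith


/-- Iteration of a local Sobolev inequality yields the volume monotonicity
`μ(B_r(x))/r^ν ≤ (2^{ν+1}λ)^{ν/2}·μ(B_s(x))/s^ν` for `0 < s ≤ r ≤ √T`. -/
theorem volume_ratio_from_sobolev {X : Type*} [MetricSpace X] [MeasurableSpace X]
    [BorelSpace X] [ProperSpace X] (μ : Measure X) (hball : BallMeasureNontrivial μ)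
    (x : X) (T ν lam : ℝ) (hT : 0 < T) (hν : 2 < ν) (hlam : 0 < lam)
    -- (a) lower volume bound
    (c Q : ℝ) (hc : 0 < c) (hQ : 0 < Q)
    (hlow : ∀ τ : ℝ, 0 < τ → τ ≤ Real.sqrt T → ENNReal.ofReal (c * τ ^ Q) ≤ μ (ball x τ))
    -- (b) Sobolev inequality on balls centered at x with radius at most √T
    (hSob : ∀ r : ℝ, 0 < r → r ≤ Real.sqrt T → ∀ φ : X → ℝ,
      (∃ K : ℝ≥0, LipschitzWith K φ) → HasCompactSupport φ → tsupport φ ⊆ ball x r →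
      (∫ y in ball x r, |φ y| ^ (2 * ν / (ν - 2)) ∂μ) ^ (1 - 2 / ν) ≤
        lam * r ^ 2 * (μ (ball x r)).toReal ^ (-(2 / ν)) *
          ((∫ y in ball x r, locLip φ y ^ 2 ∂μ) +
            (∫ y in ball x r, |φ y| ^ 2 ∂μ) / r ^ 2)) :
    ∀ s r : ℝ, 0 < s → s ≤ r → r ≤ Real.sqrt T →
      (μ (ball x r)).toReal / r ^ ν ≤
        ((2 : ℝ) ^ (ν + 1) * lam) ^ (ν / 2) * ((μ (ball x s)).toReal / s ^ ν) := by
  intro s r hs hsr hrT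
  have hr : 0 < r := lt_of_lt_of_le hs hsr
  have hsT : s ≤ Real.sqrt T := hsr.trans hrT
  have hν0 : 0 < ν := by linarith
  have hθ0 : 0 < 1 - 2/ν := by
    have h1 : 2/ν < 1 := (div_lt_one hν0).2 (by linarith)
    linarith
  have hθ1 : 1 - 2/ν < 1 := by
    have : (0:ℝ) < 2/ν := by positivity
    linarith
  have hfin : ∀ u : ℝ, 0 < u → μ (ball x u) ≠ ⊤ := fun u hu => (hball x u hu).2.ne
  have hpos : ∀ u : ℝ, 0 < u → 0 < (μ (ball x u)).toReal := fun u hu =>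
    ENNReal.toReal_pos (hball x u hu).1.ne' (hfin u hu)
  have hVrpos : 0 < (μ (ball x r)).toReal := hpos r hr
  have hVspos : 0 < (μ (ball x s)).toReal := hpos s hs
  have h2m : ∀ m : ℕ, (0:ℝ) < s/2^m := fun m => by positivity
  have h2mle : ∀ m : ℕ, s/2^m ≤ s := fun m =>
    div_le_self hs.le (one_le_pow₀ (by norm_num))
  have hVmpos : ∀ m : ℕ, 0 < (μ (ball x (s/2^m))).toReal := fun m => hpos _ (h2m m)
  have hVmle : ∀ m : ℕ, (μ (ball x (s/2^m))).toReal ≤ (μ (ball x r)).toReal := fun m =>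
    ENNReal.toReal_mono (hfin r hr) (measure_mono (ball_subset_ball ((h2mle m).trans hsr)))
  -- the one-scale Sobolev step
  have hstep : ∀ m : ℕ, ((μ (ball x (s/2^(m+1)))).toReal) ^ (1-2/ν) ≤
      (2*lam*(r/s)^2*((2:ℝ)^(m+1))^2) * ((μ (ball x r)).toReal) ^ (-(2/ν)) *
        (μ (ball x (s/2^m))).toReal := by
    intro m
    have h2t : 2*(s/2^(m+1)) = s/2^m := by
      rw [pow_succ]
      field_simp
    have htr2 : 2*(s/2^(m+1)) ≤ r := by rw [h2t]; exact (h2mle m).trans hsr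
    have h := sobolev_step μ hball x ν lam hν hlam r hr
      (fun φ h1 h2 h3 => hSob r hr hrT φ h1 h2 h3) (s/2^(m+1)) (h2m (m+1)) htr2
    rw [h2t] at h
    have hC : 2*lam*(r/(s/2^(m+1)))^2 = 2*lam*(r/s)^2*((2:ℝ)^(m+1))^2 := by
      rw [div_div_eq_mul_div, div_pow, div_pow, mul_pow]
      field_simp
    rw [hC] at h
    exact h
  -- the recursion for logarithms
  have hrec : ∀ m : ℕ, (1-2/ν) *
      ((fun m => Real.log ((μ (ball x (s/2^m))).toReal) - Real.log ((μ (ball x r)).toReal)) (m+1)) ≤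
      (Real.log (2*lam*(r/s)^2) + ((m:ℝ)+1)*(2*Real.log 2)) +
      ((fun m => Real.log ((μ (ball x (s/2^m))).toReal) - Real.log ((μ (ball x r)).toReal)) m) := by
    intro m
    simp only
    have hCpos : (0:ℝ) < 2*lam*(r/s)^2*((2:ℝ)^(m+1))^2 :=
      mul_pos (mul_pos (mul_pos two_pos hlam) (pow_pos (div_pos hr hs) 2))
        (pow_pos (pow_pos two_pos (m+1)) 2)
    have hC2pos : (0:ℝ) < 2*lam*(r/s)^2 :=
      mul_pos (mul_pos two_pos hlam) (pow_pos (div_pos hr hs) 2)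
    have hRpos : (0:ℝ) < ((μ (ball x r)).toReal) ^ (-(2/ν)) :=
      Real.rpow_pos_of_pos hVrpos _
    have hlog := Real.log_le_log (Real.rpow_pos_of_pos (hVmpos (m+1)) _) (hstep m)
    rw [Real.log_rpow (hVmpos (m+1)), Real.log_mul (mul_pos hCpos hRpos).ne' (hVmpos m).ne',
      Real.log_mul hCpos.ne' hRpos.ne', Real.log_rpow hVrpos,
      Real.log_mul hC2pos.ne' (pow_pos (pow_pos two_pos (m+1)) 2).ne',
      Real.log_pow, Real.log_pow] at hlog
    push_cast at hlog
    have hid : (1-2/ν)*Real.log ((μ (ball x r)).toReal) +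
        (2/ν)*Real.log ((μ (ball x r)).toReal) = Real.log ((μ (ball x r)).toReal) := by ring
    nlinarith [hlog, hid]
  -- seed lower bound from (a)
  have hDE : ∀ m : ℕ,
      (Real.log c + Q*Real.log s - Real.log ((μ (ball x r)).toReal)) - (m:ℝ)*(Q*Real.log 2) ≤
      ((fun m => Real.log ((μ (ball x (s/2^m))).toReal) - Real.log ((μ (ball x r)).toReal)) m) := by
    intro m
    simp only
    have h1 := hlow (s/2^m) (h2m m) ((h2mle m).trans hsT)
    have h2 : c*(s/2^m)^Q ≤ (μ (ball x (s/2^m))).toReal := by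
      have h3 := ENNReal.toReal_mono (hfin _ (h2m m)) h1
      rwa [ENNReal.toReal_ofReal
        (mul_pos hc (Real.rpow_pos_of_pos (h2m m) Q)).le] at h3
    have h4 := Real.log_le_log (mul_pos hc (Real.rpow_pos_of_pos (h2m m) Q)) h2
    rw [Real.log_mul hc.ne' (Real.rpow_pos_of_pos (h2m m) Q).ne',
      Real.log_rpow (h2m m), Real.log_div hs.ne' (pow_ne_zero m two_ne_zero),
      Real.log_pow] at h4
    push_cast at h4
    nlinarith [h4]
  have hL0 : ∀ m : ℕ,
      ((fun m => Real.log ((μ (ball x (s/2^m))).toReal) - Real.log ((μ (ball x r)).toReal)) m) ≤ 0 := by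
    intro m
    simp only
    have := Real.log_le_log (hVmpos m) (hVmle m)
    linarith
  have hmain := iterate_log (1-2/ν) hθ0 hθ1
    (fun m => Real.log ((μ (ball x (s/2^m))).toReal) - Real.log ((μ (ball x r)).toReal))
    (Real.log (2*lam*(r/s)^2)) (2*Real.log 2)
    (Real.log c + Q*Real.log s - Real.log ((μ (ball x r)).toReal)) (Q*Real.log 2)
    hrec hDE hL0
  have hb0 : ball x (s/2^(0:ℕ)) = ball x s := by norm_num
  rw [hb0] at hmain
  -- evaluate the limiting constant
  have hC2pos : (0:ℝ) < 2*lam*(r/s)^2 :=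
    mul_pos (mul_pos two_pos hlam) (pow_pos (div_pos hr hs) 2)
  have hK0 : Real.log (2*lam*(r/s)^2) =
      Real.log 2 + Real.log lam + 2*(Real.log r - Real.log s) := by
    rw [show 2*lam*(r/s)^2 = (2*lam)*((r/s)^2) by ring,
      Real.log_mul (mul_pos two_pos hlam).ne' (pow_pos (div_pos hr hs) 2).ne',
      Real.log_mul two_ne_zero hlam.ne', Real.log_pow,
      Real.log_div hr.ne' hs.ne']
    push_cast
    ring
  have hSval : (1-(1-2/ν))⁻¹*(Real.log (2*lam*(r/s)^2)+2*Real.log 2) +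
      (1-2/ν)/(1-(1-2/ν))^2*(2*Real.log 2) =
      (ν/2)*(Real.log 2 + Real.log lam + 2*(Real.log r - Real.log s)) +
      (ν^2/2)*Real.log 2 := by
    rw [hK0]
    rw [show (1:ℝ)-(1-2/ν) = 2/ν by ring]
    have hν' : ν ≠ 0 := hν0.ne'
    field_simp
    ring
  rw [hSval] at hmain
  -- final rearrangement
  have hrν : (0:ℝ) < r ^ ν := Real.rpow_pos_of_pos hr ν
  have hsν : (0:ℝ) < s ^ ν := Real.rpow_pos_of_pos hs ν
  have h2ν1 : (0:ℝ) < (2:ℝ) ^ (ν+1) := Real.rpow_pos_of_pos two_pos _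
  have hCpos : (0:ℝ) < ((2:ℝ) ^ (ν+1) * lam) ^ (ν/2) :=
    Real.rpow_pos_of_pos (mul_pos h2ν1 hlam) _
  rw [← Real.log_le_log_iff (div_pos hVrpos hrν)
    (mul_pos hCpos (div_pos hVspos hsν))]
  rw [Real.log_div hVrpos.ne' hrν.ne', Real.log_mul hCpos.ne' (div_pos hVspos hsν).ne',
    Real.log_div hVspos.ne' hsν.ne', Real.log_rpow hr, Real.log_rpow hs,
    Real.log_rpow (mul_pos h2ν1 hlam), Real.log_mul h2ν1.ne' hlam.ne',
    Real.log_rpow two_pos]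
  nlinarith [hmain]
end
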